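/- arXiv:1809.03986 — 3 statements merged into one kernel-verified Lean document; each statement's English description precedes it below -/
import Mathlib

section
/- Fix a measurable set S ⊆ ℝ^d of positive Lebesgue measure and x ∈ ℝ^d. For every ν ∈ ℝ^d and symmetric positive definite T ∈ ℝ^{d×d}, the function ℓ(·,·;x) is differentiable in the joint variable (T^♭, ν) and its gradient equals ∇ℓ(ν,T;x) = −t(x) + E_{z ∼ N(T⁻¹ν, T⁻¹, S)}[t(z)]. -/
open MeasureTheory Matrix Real
noncomputable section

def vnorm {d : ℕ} (x : Fin d → ℝ) : ℝ := Real.sqrt (∑ i, x i ^ 2)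

/-- Frobenius norm of a `d × d` real matrix. -/
def fnorm {d : ℕ} (A : Matrix (Fin d) (Fin d) ℝ) : ℝ := Real.sqrt (∑ i, ∑ j, A i j ^ 2)

/-- Density of the `d`-variate normal distribution `N(μ, Σ)`. -/
def gpdf {d : ℕ} (μ : Fin d → ℝ) (Sg : Matrix (Fin d) (Fin d) ℝ) (x : Fin d → ℝ) : ℝ :=
  (Real.sqrt ((2 * Real.pi) ^ d * Sg.det))⁻¹ *
    Real.exp (-(1 / 2) * ((x - μ) ⬝ᵥ (Sg⁻¹ *ᵥ (x - μ))))

/-- The `d`-variate normal distribution `N(μ, Σ)` as a measure on `ℝ^d`. -/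
def gauss {d : ℕ} (μ : Fin d → ℝ) (Sg : Matrix (Fin d) (Fin d) ℝ) : Measure (Fin d → ℝ) :=
  volume.withDensity fun x => ENNReal.ofReal (gpdf μ Sg x)

/-- The `S`-truncated normal distribution `N(μ, Σ, S)`: the normal `N(μ, Σ)`
conditioned on taking values in `S`. -/
def truncGauss {d : ℕ} (μ : Fin d → ℝ) (Sg : Matrix (Fin d) (Fin d) ℝ)
    (S : Set (Fin d → ℝ)) : Measure (Fin d → ℝ) :=
  ProbabilityTheory.cond (gauss μ Sg) S

/-- Mean vector of a measure on `ℝ^d`. -/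
def meanv {d : ℕ} (P : Measure (Fin d → ℝ)) : Fin d → ℝ := fun i => ∫ x, x i ∂P

/-- Covariance matrix of a measure on `ℝ^d`. -/
def covm {d : ℕ} (P : Measure (Fin d → ℝ)) : Matrix (Fin d) (Fin d) ℝ :=
  Matrix.of fun i j => ∫ x, (x i - meanv P i) * (x j - meanv P j) ∂P

/-- Single-sample negative log-likelihood of the truncated-normal model. -/
def negLogLik {d : ℕ} (S : Set (Fin d → ℝ)) (ν : Fin d → ℝ)
    (T : Matrix (Fin d) (Fin d) ℝ) (x : Fin d → ℝ) : ℝ :=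
  (1 / 2) * (x ⬝ᵥ (T *ᵥ x)) - x ⬝ᵥ ν +
    Real.log (∫ z in S, Real.exp (-(1 / 2) * (z ⬝ᵥ (T *ᵥ z)) + z ⬝ᵥ ν))

/-- Pairing of the joint statistic `t(z) = ((−(1/2) z zᵀ)^♭, z)` with a direction `(U, w)`:
`⟨t(z), (U^♭, w)⟩ = −(1/2) zᵀUz + zᵀw`.  Stating the gradient through all these pairings is
equivalent to identifying the gradient vector itself. -/
def tPair {d : ℕ} (U : Matrix (Fin d) (Fin d) ℝ) (w : Fin d → ℝ) (z : Fin d → ℝ) : ℝ :=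
  -(1 / 2) * (z ⬝ᵥ (U *ᵥ z)) + z ⬝ᵥ w


set_option maxHeartbeats 1000000

-- coercivity, integrability, Lmap lemmas assumed proven; include them here

lemma coercive {d : ℕ} {T : Matrix (Fin d) (Fin d) ℝ} (hT : T.PosDef) :
    ∃ c > 0, ∀ z : Fin d → ℝ, c * ∑ i, z i ^ 2 ≤ z ⬝ᵥ (T *ᵥ z) := by
  rcases Nat.eq_zero_or_pos d with hd | hd
  · subst hd
    exact ⟨1, one_pos, fun z => by simp [dotProduct]⟩
  · -- work in EuclideanSpace
    set q : EuclideanSpace ℝ (Fin d) → ℝ := fun z => (fun i => z i) ⬝ᵥ (T *ᵥ fun i => z i) with hq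
    have hqc : Continuous q := by
      unfold q
      simp only [dotProduct, Matrix.mulVec, dotProduct]
      fun_prop
    have i0 : Fin d := ⟨0, hd⟩
    have hptm : (EuclideanSpace.single i0 (1:ℝ)) ∈ Metric.sphere (0 : EuclideanSpace ℝ (Fin d)) 1 := by
      simp [EuclideanSpace.norm_single]
    obtain ⟨z₀, hz₀s, hmin⟩ := (isCompact_sphere (0 : EuclideanSpace ℝ (Fin d)) 1).exists_isMinOn
      ⟨_, hptm⟩ hqc.continuousOn
    have hz₀ : z₀ ≠ 0 := by
      intro h
      have := mem_sphere_zero_iff_norm.mp hz₀s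
      rw [h] at this; simp at this
    have hc : 0 < q z₀ := hT.dotProduct_mulVec_pos (x := fun i => z₀ i) (by
      intro h
      apply hz₀
      ext i
      exact congrFun h i)
    refine ⟨q z₀, hc, fun z => ?_⟩
    rcases eq_or_ne z 0 with rfl | hz
    · simp [hq, dotProduct]
    · set ze : EuclideanSpace ℝ (Fin d) := (EuclideanSpace.equiv (Fin d) ℝ).symm z with hze
      have hzne : ze ≠ 0 := by
        simpa [hze] using hz
      have hn : 0 < ‖ze‖ := norm_pos_iff.mpr hzne
      set u : EuclideanSpace ℝ (Fin d) := ‖ze‖⁻¹ • ze with hu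
      have hus : u ∈ Metric.sphere (0 : EuclideanSpace ℝ (Fin d)) 1 := by
        simp [hu, norm_smul, abs_of_pos (inv_pos.mpr hn), inv_mul_cancel₀ hn.ne']
      have hqu : q z₀ ≤ q u := hmin hus
      have hsum : ∑ i, z i ^ 2 = ‖ze‖ ^ 2 := by
        rw [EuclideanSpace.norm_eq, Real.sq_sqrt (by positivity)]
        simp [hze, sq_abs]
      have hscale : q ze = ‖ze‖^2 * q u := by
        show q ze = ‖ze‖^2 * q (‖ze‖⁻¹ • ze)
        simp only [hq]
        have : (fun i => ((‖ze‖⁻¹ • ze : EuclideanSpace ℝ (Fin d)) i)) = ‖ze‖⁻¹ • (fun i => ze i) := by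
          ext i; simp [PiLp.smul_apply]
        rw [show ((‖ze‖⁻¹ • ze : EuclideanSpace ℝ (Fin d))) = ‖ze‖⁻¹ • ze from rfl]
        rw [this, smul_dotProduct, Matrix.mulVec_smul, dotProduct_smul]
        field_simp
        simp only [smul_eq_mul]
        field_simp
      have hzze : q ze = z ⬝ᵥ (T *ᵥ z) := rfl
      calc q z₀ * ∑ i, z i ^ 2 ≤ q u * ‖ze‖^2 := by
            rw [hsum]; apply mul_le_mul_of_nonneg_right hqu (by positivity)
        _ = z ⬝ᵥ (T *ᵥ z) := by rw [← hzze, hscale]; ring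

lemma intGauss {d : ℕ} {c : ℝ} (hc : 0 < c) :
    Integrable (fun z : Fin d → ℝ => Real.exp (-c * ∑ i, z i ^ 2)) := by
  have : (fun z : Fin d → ℝ => Real.exp (-c * ∑ i, z i ^ 2)) =
      fun z : Fin d → ℝ => ∏ i, Real.exp (-c * z i ^ 2) := by
    ext z
    rw [← Real.exp_sum, Finset.mul_sum]
  rw [this]
  exact Integrable.fintype_prod (f := fun _ t => Real.exp (-c * t ^ 2)) (fun i => by
    have := integrable_exp_neg_mul_sq hc
    simpa [sq, neg_mul] using this)

noncomputable def Lmap {d : ℕ} (z : Fin d → ℝ) :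
    ((Fin d → Fin d → ℝ) × (Fin d → ℝ)) →L[ℝ] ℝ :=
  (∑ i, ∑ j, (-(1/2 : ℝ) * z i * z j) •
    ((ContinuousLinearMap.proj j).comp ((ContinuousLinearMap.proj i).comp
      (ContinuousLinearMap.fst ℝ (Fin d → Fin d → ℝ) (Fin d → ℝ)))))
  + ∑ i, z i • ((ContinuousLinearMap.proj i).comp
      (ContinuousLinearMap.snd ℝ (Fin d → Fin d → ℝ) (Fin d → ℝ)))

lemma Lmap_apply {d : ℕ} (z : Fin d → ℝ) (p : (Fin d → Fin d → ℝ) × (Fin d → ℝ)) :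
    Lmap z p = -(1/2) * (z ⬝ᵥ (Matrix.of p.1 *ᵥ z)) + z ⬝ᵥ p.2 := by
  simp only [Lmap, ContinuousLinearMap.add_apply, ContinuousLinearMap.sum_apply,
    ContinuousLinearMap.smul_apply, ContinuousLinearMap.comp_apply,
    ContinuousLinearMap.proj_apply, ContinuousLinearMap.coe_fst',
    ContinuousLinearMap.coe_snd', smul_eq_mul, dotProduct, Matrix.mulVec]
  congr 1
  rw [Finset.mul_sum]
  apply Finset.sum_congr rfl
  intro i _
  rw [Finset.mul_sum, Finset.mul_sum]
  apply Finset.sum_congr rfl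
  intro j _
  simp [dotProduct, Matrix.of_apply]
  ring

lemma Lmap_cont {d : ℕ} : Continuous (fun z : Fin d → ℝ => Lmap z) := by
  unfold Lmap
  apply Continuous.add
  · apply continuous_finset_sum
    intro i _
    apply continuous_finset_sum
    intro j _
    exact Continuous.smul (by fun_prop : Continuous fun z : Fin d → ℝ => -(1/2 : ℝ) * z i * z j) continuous_const
  · apply continuous_finset_sum
    intro i _
    exact Continuous.smul (continuous_apply i) continuous_const

lemma Lmap_norm {d : ℕ} (z : Fin d → ℝ) :
    ‖Lmap z‖ ≤ (1/2) * (∑ i, |z i|)^2 + ∑ i, |z i| := by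
  have hA : (0:ℝ) ≤ ∑ i, |z i| := Finset.sum_nonneg fun i _ => abs_nonneg _
  apply ContinuousLinearMap.opNorm_le_bound _ (by positivity)
  intro q
  rw [Lmap_apply]
  have hq1 : ∀ i j, |q.1 i j| ≤ ‖q‖ := by
    intro i j
    calc |q.1 i j| = ‖q.1 i j‖ := rfl
      _ ≤ ‖q.1 i‖ := norm_le_pi_norm (q.1 i) j
      _ ≤ ‖q.1‖ := norm_le_pi_norm q.1 i
      _ ≤ ‖q‖ := norm_fst_le q
  have hq2 : ∀ i, |q.2 i| ≤ ‖q‖ := by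
    intro i
    calc |q.2 i| = ‖q.2 i‖ := rfl
      _ ≤ ‖q.2‖ := norm_le_pi_norm q.2 i
      _ ≤ ‖q‖ := norm_snd_le q
  have h1 : |z ⬝ᵥ (Matrix.of q.1 *ᵥ z)| ≤ (∑ i, |z i|)^2 * ‖q‖ := by
    calc |z ⬝ᵥ (Matrix.of q.1 *ᵥ z)| ≤ ∑ i, |z i * ∑ j, q.1 i j * z j| := by
          apply Finset.abs_sum_le_sum_abs
      _ ≤ ∑ i, |z i| * (‖q‖ * ∑ j, |z j|) := by
          apply Finset.sum_le_sum
          intro i _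
          rw [abs_mul]
          apply mul_le_mul_of_nonneg_left _ (abs_nonneg _)
          calc |∑ j, q.1 i j * z j| ≤ ∑ j, |q.1 i j * z j| := Finset.abs_sum_le_sum_abs _ _
            _ ≤ ∑ j, ‖q‖ * |z j| := by
                apply Finset.sum_le_sum
                intro j _
                rw [abs_mul]
                exact mul_le_mul_of_nonneg_right (hq1 i j) (abs_nonneg _)
            _ = ‖q‖ * ∑ j, |z j| := by rw [Finset.mul_sum]
      _ = (∑ i, |z i|)^2 * ‖q‖ := by rw [← Finset.sum_mul]; ring
  have h2 : |z ⬝ᵥ q.2| ≤ (∑ i, |z i|) * ‖q‖ := by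
    calc |z ⬝ᵥ q.2| ≤ ∑ i, |z i * q.2 i| := Finset.abs_sum_le_sum_abs _ _
      _ ≤ ∑ i, |z i| * ‖q‖ := by
          apply Finset.sum_le_sum
          intro i _
          rw [abs_mul]
          exact mul_le_mul_of_nonneg_left (hq2 i) (abs_nonneg _)
      _ = (∑ i, |z i|) * ‖q‖ := by rw [Finset.sum_mul]
  calc ‖-(1/2) * (z ⬝ᵥ (Matrix.of q.1 *ᵥ z)) + z ⬝ᵥ q.2‖
      ≤ ‖-(1/2) * (z ⬝ᵥ (Matrix.of q.1 *ᵥ z))‖ + ‖z ⬝ᵥ q.2‖ := norm_add_le _ _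
    _ = (1/2) * |z ⬝ᵥ (Matrix.of q.1 *ᵥ z)| + |z ⬝ᵥ q.2| := by
        rw [Real.norm_eq_abs, Real.norm_eq_abs, abs_mul]
        norm_num
    _ ≤ (1/2) * ((∑ i, |z i|)^2 * ‖q‖) + (∑ i, |z i|) * ‖q‖ := by
        apply add_le_add _ h2
        exact mul_le_mul_of_nonneg_left h1 (by norm_num)
    _ = ((1/2) * (∑ i, |z i|)^2 + ∑ i, |z i|) * ‖q‖ := by ring


lemma amgm {c : ℝ} (hc : 0 < c) (B t : ℝ) : B * t ≤ 2 * B ^ 2 / c + c / 8 * t ^ 2 := by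
  rw [← sub_nonneg]
  have h : 2 * B ^ 2 / c + c / 8 * t ^ 2 - B * t = (c * t - 4 * B) ^ 2 / (8 * c) := by
    field_simp
    ring
  rw [h]
  positivity

/-- Fix a measurable `S ⊆ ℝ^d` of positive Lebesgue measure and `x ∈ ℝ^d`.
For every `ν` and symmetric positive definite `T`, `ℓ(·,·;x)` is differentiable in the joint
variable `(T^♭, ν)` and its gradient is `−t(x) + E_{z ∼ N(T⁻¹ν, T⁻¹, S)}[t(z)]`, i.e. the
derivative in any direction `(U^♭, w)` equals
`−⟨t(x),(U^♭,w)⟩ + E_{z ∼ N(T⁻¹ν, T⁻¹, S)}[⟨t(z),(U^♭,w)⟩]`. -/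
theorem statement2 {d : ℕ} (S : Set (Fin d → ℝ)) (hS : MeasurableSet S)
    (hpos : 0 < volume S) (x : Fin d → ℝ)
    (ν : Fin d → ℝ) (T : Matrix (Fin d) (Fin d) ℝ) (hT : T.PosDef) (hTsymm : T.IsSymm) :
    ∃ L : ((Fin d → Fin d → ℝ) × (Fin d → ℝ)) →L[ℝ] ℝ,
      HasFDerivAt
        (fun p : (Fin d → Fin d → ℝ) × (Fin d → ℝ) => negLogLik S p.2 (Matrix.of p.1) x)
        L (Matrix.of.symm T, ν) ∧
      ∀ (U : Matrix (Fin d) (Fin d) ℝ) (w : Fin d → ℝ),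
        L (Matrix.of.symm U, w) =
          -(tPair U w x) + ∫ z, tPair U w z ∂(truncGauss (T⁻¹ *ᵥ ν) T⁻¹ S) := by

  classical
  set p₀ : (Fin d → Fin d → ℝ) × (Fin d → ℝ) := (Matrix.of.symm T, ν) with hp₀
  have hofp₀ : Matrix.of p₀.1 = T := rfl
  obtain ⟨c, hc, hcoer⟩ := coercive hT
  set Q : (Fin d → ℝ) → ℝ := fun z => ∑ i, z i ^ 2 with hQdef
  set A : (Fin d → ℝ) → ℝ := fun z => ∑ i, |z i| with hAdef
  have hQ0 : ∀ z, 0 ≤ Q z := fun z => Finset.sum_nonneg fun i _ => sq_nonneg _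
  have hA0 : ∀ z, 0 ≤ A z := fun z => Finset.sum_nonneg fun i _ => abs_nonneg _
  set ε : ℝ := c / (4 * (d + 1)) with hεdef
  have hε : 0 < ε := by positivity
  set B : ℝ := ‖ν‖ + ε with hBdef
  have hB0 : 0 ≤ B := by positivity
  set C₀ : ℝ := (d : ℝ) * (2 * B ^ 2 / c) with hC₀def
  have hA2 : ∀ z, A z ^ 2 ≤ (d : ℝ) * Q z := by
    intro z
    have := sq_sum_le_card_mul_sum_sq (s := Finset.univ) (f := fun i => |z i|)
    simpa [sq_abs, hAdef, hQdef] using this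
  have hA4 : ∀ z, A z ≤ (d : ℝ) + Q z := by
    intro z
    have h : ∀ i : Fin d, |z i| ≤ 1 + z i ^ 2 := by
      intro i
      nlinarith [sq_nonneg (|z i| - 1), sq_abs (z i)]
    calc A z ≤ ∑ i : Fin d, (1 + z i ^ 2) := Finset.sum_le_sum fun i _ => h i
      _ = (d : ℝ) + Q z := by simp [Finset.sum_add_distrib, hQdef]
  have hBA : ∀ z, B * A z ≤ C₀ + c / 8 * Q z := by
    intro z
    have h : ∀ i : Fin d, B * |z i| ≤ 2 * B ^ 2 / c + c / 8 * z i ^ 2 := by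
      intro i
      have := amgm hc B |z i|
      rwa [sq_abs] at this
    calc B * A z = ∑ i, B * |z i| := by rw [hAdef]; exact Finset.mul_sum _ _ _
      _ ≤ ∑ i : Fin d, (2 * B ^ 2 / c + c / 8 * z i ^ 2) := Finset.sum_le_sum fun i _ => h i
      _ = C₀ + c / 8 * Q z := by
          rw [Finset.sum_add_distrib, hC₀def, hQdef]
          simp [Finset.mul_sum, mul_comm]
  -- exponent bound on the ball
  have hεd : ε * (d : ℝ) / 2 ≤ c / 8 := by
    rw [hεdef, div_mul_eq_mul_div, div_div, div_le_div_iff₀ (by positivity) (by norm_num)]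
    have hd0 : (0:ℝ) ≤ (d:ℝ) := Nat.cast_nonneg d
    nlinarith [hc.le]
  have hLp₀ : ∀ z, Lmap z p₀ ≤ -(c / 2) * Q z + ‖ν‖ * A z := by
    intro z
    rw [Lmap_apply, hofp₀]
    have h1 : c * Q z ≤ z ⬝ᵥ (T *ᵥ z) := hcoer z
    have h2 : z ⬝ᵥ p₀.2 ≤ ‖ν‖ * A z := by
      have : ∀ i : Fin d, z i * ν i ≤ ‖ν‖ * |z i| := by
        intro i
        calc z i * ν i ≤ |z i * ν i| := le_abs_self _
          _ = |ν i| * |z i| := by rw [abs_mul]; ring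
          _ ≤ ‖ν‖ * |z i| := by
              apply mul_le_mul_of_nonneg_right _ (abs_nonneg _)
              exact norm_le_pi_norm ν i
      calc z ⬝ᵥ p₀.2 = ∑ i, z i * ν i := rfl
        _ ≤ ∑ i, ‖ν‖ * |z i| := Finset.sum_le_sum fun i _ => this i
        _ = ‖ν‖ * A z := by rw [hAdef, Finset.mul_sum]
    linarith
  have hexpb : ∀ z, ∀ p ∈ Metric.ball p₀ ε, Lmap z p ≤ -(c / 4) * Q z + C₀ := by
    intro z p hp
    have hsplit : Lmap z p = Lmap z p₀ + Lmap z (p - p₀) := by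
      rw [map_sub]; ring
    have hpd : ‖p - p₀‖ ≤ ε := by
      rw [← dist_eq_norm]
      exact le_of_lt (Metric.mem_ball.mp hp)
    have h2 : |Lmap z (p - p₀)| ≤ ((1/2) * A z ^ 2 + A z) * ε := by
      calc |Lmap z (p - p₀)| = ‖Lmap z (p - p₀)‖ := rfl
        _ ≤ ‖Lmap z‖ * ‖p - p₀‖ := (Lmap z).le_opNorm _
        _ ≤ ((1/2) * A z ^ 2 + A z) * ε := by
            apply mul_le_mul (Lmap_norm z) hpd (norm_nonneg _)
            have := hA0 z; positivity
    have h2' : Lmap z (p - p₀) ≤ (1/2) * ε * ((d:ℝ) * Q z) + ε * A z := by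
      have := le_of_abs_le h2
      nlinarith [hA2 z, hA0 z, hε.le]
    have hνε : (‖ν‖ + ε) * A z ≤ C₀ + c / 8 * Q z := hBA z
    have hεQ : (1/2) * ε * ((d:ℝ) * Q z) ≤ c / 8 * Q z := by
      have := hQ0 z
      nlinarith [hεd]
    have := hLp₀ z
    rw [hsplit]
    nlinarith [hA0 z, hε.le, norm_nonneg ν]
  -- the integrable bound
  set K : ℝ := Real.exp C₀ * (8 * ((d : ℝ) / 2 + 1) / c + (d : ℝ) + 1) with hKdef
  set bound : (Fin d → ℝ) → ℝ := fun z => K * Real.exp (-(c / 8) * Q z) with hbounddef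
  have hKpos : 0 < 8 * ((d : ℝ) / 2 + 1) / c + (d : ℝ) + 1 := by positivity
  have hpolyb : ∀ z, ((d : ℝ) / 2 + 1) * Q z + (d : ℝ) ≤
      (8 * ((d : ℝ) / 2 + 1) / c + (d : ℝ) + 1) * Real.exp (c / 8 * Q z) := by
    intro z
    have ht : c / 8 * Q z ≤ Real.exp (c / 8 * Q z) := by
      have := Real.add_one_le_exp (c / 8 * Q z); linarith
    have h1 : (1 : ℝ) ≤ Real.exp (c / 8 * Q z) := Real.one_le_exp (by positivity)
    have hQz := hQ0 z
    have hd0 : (0:ℝ) ≤ (d:ℝ) := Nat.cast_nonneg d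
    have key : ((d : ℝ) / 2 + 1) * Q z ≤ 8 * ((d : ℝ) / 2 + 1) / c * Real.exp (c / 8 * Q z) := by
      have h2 : Q z ≤ 8 / c * Real.exp (c / 8 * Q z) := by
        rw [div_mul_eq_mul_div, le_div_iff₀ hc]
        nlinarith
      calc ((d : ℝ) / 2 + 1) * Q z ≤ ((d : ℝ) / 2 + 1) * (8 / c * Real.exp (c / 8 * Q z)) := by
            apply mul_le_mul_of_nonneg_left h2 (by positivity)
        _ = 8 * ((d : ℝ) / 2 + 1) / c * Real.exp (c / 8 * Q z) := by ring
    nlinarith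
  have hnormb : ∀ z, ∀ p ∈ Metric.ball p₀ ε,
      ‖Real.exp (Lmap z p) • Lmap z‖ ≤ bound z := by
    intro z p hp
    have hsm : ‖Real.exp (Lmap z p) • Lmap z‖ = Real.exp (Lmap z p) * ‖Lmap z‖ := by
      have := norm_smul (Real.exp (Lmap z p)) (Lmap z)
      rwa [Real.norm_eq_abs, abs_of_pos (Real.exp_pos _)] at this
    rw [hsm]
    have h1 : Real.exp (Lmap z p) ≤ Real.exp (-(c / 4) * Q z + C₀) :=
      Real.exp_le_exp.mpr (hexpb z p hp)
    have h2 : ‖Lmap z‖ ≤ ((d : ℝ) / 2 + 1) * Q z + (d : ℝ) := by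
      calc ‖Lmap z‖ ≤ (1/2) * A z ^ 2 + A z := Lmap_norm z
        _ ≤ (1/2) * ((d : ℝ) * Q z) + ((d : ℝ) + Q z) := by
            have := hA2 z; have := hA4 z
            nlinarith
        _ = ((d : ℝ) / 2 + 1) * Q z + (d : ℝ) := by ring
    calc Real.exp (Lmap z p) * ‖Lmap z‖
        ≤ Real.exp (-(c / 4) * Q z + C₀) * (((d : ℝ) / 2 + 1) * Q z + (d : ℝ)) := by
          apply mul_le_mul h1 h2 (norm_nonneg _) (Real.exp_pos _).le
      _ ≤ Real.exp (-(c / 4) * Q z + C₀) *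
          ((8 * ((d : ℝ) / 2 + 1) / c + (d : ℝ) + 1) * Real.exp (c / 8 * Q z)) := by
          apply mul_le_mul_of_nonneg_left (hpolyb z) (Real.exp_pos _).le
      _ = bound z := by
          simp only [hbounddef, hKdef]
          rw [mul_left_comm, ← Real.exp_add]
          rw [show (-(c / 4) * Q z + C₀ + c / 8 * Q z) = C₀ + -(c / 8) * Q z by ring]
          rw [Real.exp_add]
          ring
  have hbound_int : Integrable bound (volume.restrict S) := by
    apply Integrable.restrict
    exact (intGauss (by positivity : (0:ℝ) < c / 8)).const_mul K
  have hbound0 : ∀ z, 0 ≤ bound z := by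
    intro z
    rw [hbounddef]
    have : 0 < K := by rw [hKdef]; positivity
    positivity
  -- measurability / continuity facts
  have hcontL : Continuous fun z : Fin d → ℝ => Lmap z := Lmap_cont
  have hcontFp : ∀ p, Continuous fun z : Fin d → ℝ => Real.exp (Lmap z p) := by
    intro p
    exact Real.continuous_exp.comp ((ContinuousLinearMap.apply ℝ ℝ p).continuous.comp hcontL)
  have hF_int : Integrable (fun z => Real.exp (Lmap z p₀)) (volume.restrict S) := by
    apply Integrable.mono hbound_int ((hcontFp p₀).aestronglyMeasurable)
    apply Filter.Eventually.of_forall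
    intro z
    rw [Real.norm_eq_abs, abs_of_pos (Real.exp_pos _), Real.norm_eq_abs, abs_of_nonneg (hbound0 z)]
    have h1 : Real.exp (Lmap z p₀) ≤ Real.exp (-(c / 4) * Q z + C₀) :=
      Real.exp_le_exp.mpr (hexpb z p₀ (Metric.mem_ball_self hε))
    have hM1 : (1:ℝ) ≤ 8 * ((d : ℝ) / 2 + 1) / c + (d : ℝ) + 1 := by
      have h1 : (0:ℝ) ≤ 8 * ((d : ℝ) / 2 + 1) / c := by positivity
      have h2 : (0:ℝ) ≤ (d:ℝ) := Nat.cast_nonneg d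
      linarith
    calc Real.exp (Lmap z p₀) ≤ Real.exp (-(c / 4) * Q z + C₀) := h1
      _ = Real.exp C₀ * Real.exp (-(c / 4) * Q z) := by rw [← Real.exp_add]; ring_nf
      _ ≤ Real.exp C₀ * Real.exp (-(c / 8) * Q z) := by
          apply mul_le_mul_of_nonneg_left _ (Real.exp_pos _).le
          apply Real.exp_le_exp.mpr
          nlinarith [hQ0 z]
      _ ≤ K * Real.exp (-(c / 8) * Q z) := by
          apply mul_le_mul_of_nonneg_right _ (Real.exp_pos _).le
          rw [hKdef]
          exact le_mul_of_one_le_right (Real.exp_pos _).le hM1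
      _ = bound z := rfl
  have hF'cont : Continuous fun z : Fin d → ℝ => Real.exp (Lmap z p₀) • Lmap z :=
    (hcontFp p₀).smul hcontL
  have hDZ_int : Integrable (fun z => Real.exp (Lmap z p₀) • Lmap z) (volume.restrict S) := by
    apply Integrable.mono hbound_int hF'cont.aestronglyMeasurable
    apply Filter.Eventually.of_forall
    intro z
    rw [Real.norm_eq_abs, abs_of_nonneg (hbound0 z)]
    exact hnormb z p₀ (Metric.mem_ball_self hε)
  -- derivative of the partition function
  set Z : ((Fin d → Fin d → ℝ) × (Fin d → ℝ)) → ℝ :=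
    fun p => ∫ z in S, Real.exp (Lmap z p) with hZdef
  set DZ : ((Fin d → Fin d → ℝ) × (Fin d → ℝ)) →L[ℝ] ℝ :=
    ∫ z in S, Real.exp (Lmap z p₀) • Lmap z with hDZdef
  have hZderiv : HasFDerivAt Z DZ p₀ := by
    apply hasFDerivAt_integral_of_dominated_of_fderiv_le (Metric.ball_mem_nhds p₀ hε)
      (Filter.Eventually.of_forall fun p => (hcontFp p).aestronglyMeasurable) hF_int
      hF'cont.aestronglyMeasurable
      (Filter.Eventually.of_forall fun z p hp => hnormb z p hp) hbound_int
      (Filter.Eventually.of_forall fun z p _ =>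
        (Real.hasDerivAt_exp (Lmap z p)).comp_hasFDerivAt p (Lmap z).hasFDerivAt)
  have hZpos : 0 < Z p₀ := by
    rw [hZdef]
    simp only []
    rw [setIntegral_pos_iff_support_of_nonneg_ae
      (Filter.Eventually.of_forall fun z => (Real.exp_pos _).le) hF_int]
    have hsupp : (Function.support fun z => Real.exp (Lmap z p₀)) ∩ S = S := by
      apply Set.inter_eq_right.mpr
      intro z _
      exact Real.exp_ne_zero _
    rw [hsupp]
    exact hpos
  -- the full derivative
  set L : ((Fin d → Fin d → ℝ) × (Fin d → ℝ)) →L[ℝ] ℝ := -(Lmap x) + (Z p₀)⁻¹ • DZ with hLdef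
  have hfun : (fun p : (Fin d → Fin d → ℝ) × (Fin d → ℝ) => negLogLik S p.2 (Matrix.of p.1) x)
      = fun p => -(Lmap x p) + Real.log (Z p) := by
    funext p
    have h1 : ∀ z : Fin d → ℝ,
        Real.exp (-(1/2) * (z ⬝ᵥ (Matrix.of p.1 *ᵥ z)) + z ⬝ᵥ p.2) = Real.exp (Lmap z p) :=
      fun z => by rw [Lmap_apply]
    simp only [negLogLik, hZdef, h1]
    rw [Lmap_apply]
    ring_nf
  have hL1 : HasFDerivAt
      (fun p : (Fin d → Fin d → ℝ) × (Fin d → ℝ) => negLogLik S p.2 (Matrix.of p.1) x) L p₀ := by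
    rw [hfun, hLdef]
    exact ((Lmap x).hasFDerivAt.neg).add
      ((Real.hasDerivAt_log hZpos.ne').comp_hasFDerivAt p₀ hZderiv)
  refine ⟨L, hL1, ?_⟩
  intro U w
  set q : (Fin d → Fin d → ℝ) × (Fin d → ℝ) := (Matrix.of.symm U, w) with hqdef
  have htp : ∀ z : Fin d → ℝ, Lmap z q = tPair U w z := by
    intro z
    rw [Lmap_apply]
    simp [tPair, hqdef]
  -- the Gaussian density rewrite
  have hdet : IsUnit T.det := isUnit_iff_ne_zero.mpr (ne_of_gt hT.det_pos)
  have hinvinv : (T⁻¹)⁻¹ = T := Matrix.nonsing_inv_nonsing_inv T hdet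
  have hTμ : T *ᵥ (T⁻¹ *ᵥ ν) = ν := by
    rw [Matrix.mulVec_mulVec, Matrix.mul_nonsing_inv T hdet, Matrix.one_mulVec]
  set μh : Fin d → ℝ := T⁻¹ *ᵥ ν with hμh
  set Kg : ℝ := (Real.sqrt ((2 * Real.pi) ^ d * (T⁻¹).det))⁻¹ *
    Real.exp (-(1/2) * (μh ⬝ᵥ ν)) with hKgdef
  have hdetinv : 0 < (T⁻¹).det := hT.inv.det_pos
  have hKg : 0 < Kg := by
    rw [hKgdef]
    have h2π : (0:ℝ) < (2 * Real.pi) ^ d := by positivity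
    have : 0 < Real.sqrt ((2 * Real.pi) ^ d * (T⁻¹).det) :=
      Real.sqrt_pos.mpr (by positivity)
    positivity
  have hgpdf : ∀ z : Fin d → ℝ, gpdf μh T⁻¹ z = Kg * Real.exp (Lmap z p₀) := by
    intro z
    have e2 : μh ⬝ᵥ (T *ᵥ z) = z ⬝ᵥ ν := by
      rw [dotProduct_mulVec]
      have : μh ᵥ* T = ν := by
        nth_rewrite 1 [← hTsymm]
        rw [Matrix.vecMul_transpose, hμh, hTμ]
      rw [this, dotProduct_comm]
    have e1 : (z - μh) ⬝ᵥ (T *ᵥ (z - μh)) =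
        z ⬝ᵥ (T *ᵥ z) - z ⬝ᵥ ν - z ⬝ᵥ ν + μh ⬝ᵥ ν := by
      rw [Matrix.mulVec_sub, dotProduct_sub, sub_dotProduct, sub_dotProduct, hμh, hTμ, ← hμh, e2]
      ring
    have hexp : -(1/2) * ((z - μh) ⬝ᵥ (T *ᵥ (z - μh))) = -(1/2) * (μh ⬝ᵥ ν) + Lmap z p₀ := by
      rw [e1, Lmap_apply, hofp₀]
      ring
    show (Real.sqrt ((2 * Real.pi) ^ d * (T⁻¹).det))⁻¹ *
        Real.exp (-(1 / 2) * ((z - μh) ⬝ᵥ ((T⁻¹)⁻¹ *ᵥ (z - μh)))) = Kg * Real.exp (Lmap z p₀)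
    rw [hinvinv, hexp, Real.exp_add, hKgdef]
    ring
  have hKint : Integrable (fun z => Kg * Real.exp (Lmap z p₀)) (volume.restrict S) :=
    hF_int.const_mul Kg
  have hgm : gauss μh T⁻¹ = volume.withDensity
      (fun z => ENNReal.ofReal (Kg * Real.exp (Lmap z p₀))) := by
    rw [gauss]
    congr 1
    funext z
    rw [hgpdf z]
  have hgS : gauss μh T⁻¹ S = ENNReal.ofReal (Kg * Z p₀) := by
    rw [hgm, withDensity_apply _ hS,
      ← ofReal_integral_eq_lintegral_ofReal hKint
        (Filter.Eventually.of_forall fun z => by positivity)]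
    congr 1
    rw [integral_const_mul]
  have hmeasd : Measurable fun z : Fin d → ℝ => Real.toNNReal (Kg * Real.exp (Lmap z p₀)) :=
    (continuous_const.mul (hcontFp p₀)).measurable.real_toNNReal
  have htpmeas : Measurable fun z : Fin d → ℝ => tPair U w z := by
    have : Continuous fun z : Fin d → ℝ => Lmap z q :=
      (ContinuousLinearMap.apply ℝ ℝ q).continuous.comp hcontL
    have h2 : Continuous fun z : Fin d → ℝ => tPair U w z := by
      have := this
      simp only [htp] at this
      exact this
    exact h2.measurable
  have hwd : ∫ z, tPair U w z ∂((volume.restrict S).withDensity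
      (fun z => ENNReal.ofReal (Kg * Real.exp (Lmap z p₀)))) =
      ∫ z in S, (Kg * Real.exp (Lmap z p₀)) * tPair U w z := by
    have hrfl : (fun z : Fin d → ℝ => ENNReal.ofReal (Kg * Real.exp (Lmap z p₀)))
        = (fun z : Fin d → ℝ =>
          ((Real.toNNReal (Kg * Real.exp (Lmap z p₀)) : NNReal) : ENNReal)) := rfl
    rw [hrfl, integral_withDensity_eq_integral_smul hmeasd]
    congr 1
    funext z
    rw [NNReal.smul_def, Real.coe_toNNReal _ (by positivity), smul_eq_mul]
  have hTG : ∫ z, tPair U w z ∂(truncGauss μh T⁻¹ S) =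
      (Z p₀)⁻¹ * ∫ z in S, Real.exp (Lmap z p₀) * tPair U w z := by
    rw [truncGauss, ProbabilityTheory.cond, integral_smul_measure, hgS]
    have hres : (gauss μh T⁻¹).restrict S = (volume.restrict S).withDensity
        (fun z => ENNReal.ofReal (Kg * Real.exp (Lmap z p₀))) := by
      rw [hgm, restrict_withDensity hS]
    rw [hres, hwd]
    rw [ENNReal.toReal_inv, ENNReal.toReal_ofReal (by positivity)]
    have hconst : ∫ z in S, Kg * Real.exp (Lmap z p₀) * tPair U w z
        = Kg * ∫ z in S, Real.exp (Lmap z p₀) * tPair U w z := by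
      simp_rw [mul_assoc]
      rw [integral_const_mul]
    rw [smul_eq_mul, hconst, mul_inv]
    field_simp
  -- conclude
  have hDZq : DZ q = ∫ z in S, Real.exp (Lmap z p₀) * Lmap z q := by
    rw [hDZdef, ContinuousLinearMap.integral_apply hDZ_int]
    simp only [ContinuousLinearMap.smul_apply, smul_eq_mul]
  have hLq : L q = -(Lmap x q) + (Z p₀)⁻¹ * DZ q := by
    rw [hLdef]
    simp [ContinuousLinearMap.add_apply, ContinuousLinearMap.neg_apply,
      ContinuousLinearMap.smul_apply, smul_eq_mul]
  simp_rw [htp] at hDZq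
  rw [hLq, hDZq, htp x, hTG]

end
end

section
/- Let Σ ∈ ℝ^{d×d} be symmetric positive definite. For every symmetric U ∈ ℝ^{d×d} and every v ∈ ℝ^d, Var_{z∼N(0,Σ)}[−(1/2) zᵀUz + vᵀz] ≥ (1/2) λ_m(Σ) (‖U‖_F² + ‖v‖₂²). Consequently, in the untruncated case S = ℝ^d, the Hessian of the negative log-likelihood ℓ at any parameter (ν,T) with ν = 0, restricted to directions (U^♭, v) with U symmetric, is bounded below by (1/2) λ_m(T⁻¹) times the identity quadratic form. -/
open MeasureTheory ProbabilityTheory Matrix Real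

noncomputable section

/-- The minimum eigenvalue `λ_m(Σ) = min{ min_{i,j} λ_i λ_j , min_i λ_i }` of the fourth
moment tensor of `N(0,Σ)`, where `λ₁,…,λ_d` are the eigenvalues of the Hermitian matrix `Σ`. -/
def lambdaM {d : ℕ} (Sg : Matrix (Fin d) (Fin d) ℝ) (hSg : Sg.IsHermitian) : ℝ :=
  min (⨅ p : Fin d × Fin d, hSg.eigenvalues p.1 * hSg.eigenvalues p.2)
    (⨅ i, hSg.eigenvalues i)



def p1 (v t : ℝ) : ℝ := (Real.sqrt (2 * Real.pi * v))⁻¹ * Real.exp (-((2 * v)⁻¹) * t ^ 2)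

lemma continuous_p1 (v : ℝ) : Continuous (p1 v) := by
  unfold p1; fun_prop

lemma p1_nonneg (v t : ℝ) : 0 ≤ p1 v t := by
  unfold p1; positivity

lemma integrable_p1_mul_pow {v : ℝ} (hv : 0 < v) (n : ℕ) :
    Integrable (fun t => p1 v t * t ^ n) := by
  have hb : 0 < (2 * v)⁻¹ := by positivity
  have h := (integrable_rpow_mul_exp_neg_mul_sq hb (s := n) (by
    have : (0:ℝ) ≤ n := Nat.cast_nonneg n
    linarith)).const_mul (Real.sqrt (2 * Real.pi * v))⁻¹
  refine h.congr (by
    filter_upwards with t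
    simp only [p1, Real.rpow_natCast]
    ring)

def m1 (v : ℝ) (n : ℕ) : ℝ := ∫ t, p1 v t * t ^ n

lemma sqrt_two_pi_v {v : ℝ} (hv : 0 < v) :
    Real.sqrt (2 * Real.pi * v) = Real.sqrt (2 * v) * Real.sqrt Real.pi := by
  rw [← Real.sqrt_mul (by positivity)]
  ring_nf

lemma m1_zero {v : ℝ} (hv : 0 < v) : m1 v 0 = 1 := by
  have h : m1 v 0 = (Real.sqrt (2 * Real.pi * v))⁻¹ * ∫ t : ℝ, Real.exp (-((2*v)⁻¹) * t ^ 2) := by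
    rw [m1, ← integral_const_mul]
    congr 1 with t
    simp [p1]
  rw [h, integral_gaussian]
  have h2 : Real.pi / (2*v)⁻¹ = 2 * Real.pi * v := by field_simp
  rw [h2]
  have : Real.sqrt (2 * Real.pi * v) ≠ 0 := by positivity
  field_simp

lemma m1_odd {v : ℝ} (n : ℕ) (hn : Odd n) : m1 v n = 0 := by
  have : ∫ t : ℝ, p1 v t * t ^ n = ∫ t : ℝ, p1 v (-t) * (-t) ^ n :=
    (integral_neg_eq_self _ _).symm
  have h2 : ∀ t : ℝ, p1 v (-t) * (-t) ^ n = -(p1 v t * t ^ n) := by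
    intro t
    rw [hn.neg_pow]
    simp [p1]
  rw [m1] at *
  have := this.trans (by rw [integral_congr_ae (Filter.Eventually.of_forall h2), integral_neg])
  linarith

lemma integral_even_moment {v : ℝ} (hv : 0 < v) (k : ℕ) :
    ∫ t : ℝ, t ^ (2 * k) * Real.exp (-((2*v)⁻¹) * t ^ 2)
      = 2 * ((2*v)⁻¹ ^ (-(2*(k:ℝ) + 1) / 2) * (1 / 2)
          * Real.Gamma ((2*(k:ℝ) + 1) / 2)) := by
  have hb : 0 < (2*v)⁻¹ := by positivity
  have habs : ∀ x : ℝ, |x| ^ (2*k) * Real.exp (-((2*v)⁻¹) * |x| ^ 2)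
      = x ^ (2*k) * Real.exp (-((2*v)⁻¹) * x ^ 2) := by
    intro x
    rw [pow_mul, sq_abs, ← pow_mul]
  have h2 : ∫ t : ℝ, (fun s => s ^ (2*k) * Real.exp (-((2*v)⁻¹) * s ^ 2)) |t|
      = 2 * ∫ t in Set.Ioi (0:ℝ), (fun s => s ^ (2*k) * Real.exp (-((2*v)⁻¹) * s ^ 2)) t :=
    integral_comp_abs (f := fun s => s ^ (2*k) * Real.exp (-((2*v)⁻¹) * s ^ 2))
  simp only at h2
  calc ∫ t : ℝ, t ^ (2*k) * Real.exp (-((2*v)⁻¹) * t ^ 2)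
      = ∫ t : ℝ, |t| ^ (2*k) * Real.exp (-((2*v)⁻¹) * |t| ^ 2) := by
        congr 1 with t; exact (habs t).symm
    _ = 2 * ∫ t in Set.Ioi (0:ℝ), t ^ (2*k) * Real.exp (-((2*v)⁻¹) * t ^ 2) := h2
    _ = 2 * ∫ t in Set.Ioi (0:ℝ), t ^ (((2 * k : ℕ)) : ℝ) * Real.exp (-((2*v)⁻¹) * t ^ (2:ℝ)) := by
        congr 1
        refine setIntegral_congr_fun measurableSet_Ioi (fun x hx => ?_)
        rw [Real.rpow_natCast, Real.rpow_two]
    _ = _ := by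
        rw [integral_rpow_mul_exp_neg_mul_rpow (by norm_num) (by have : (0:ℝ) ≤ ((2*k:ℕ):ℝ) := Nat.cast_nonneg _; linarith) hb]
        push_cast
        ring_nf

lemma rpow_inv_eval {v : ℝ} (hv : 0 < v) (a : ℝ) :
    ((2*v)⁻¹ : ℝ) ^ (-a) = (2*v) ^ a := by
  rw [Real.inv_rpow (by positivity : (0:ℝ) ≤ 2*v), ← Real.rpow_neg (by positivity : (0:ℝ) ≤ 2*v),
    neg_neg]

lemma m1_two {v : ℝ} (hv : 0 < v) : m1 v 2 = v := by
  have h : m1 v 2 = (Real.sqrt (2 * Real.pi * v))⁻¹ * ∫ t : ℝ, t ^ 2 * Real.exp (-((2*v)⁻¹) * t ^ 2) := by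
    rw [m1, ← integral_const_mul]
    congr 1 with t
    simp [p1]; ring
  have hk := integral_even_moment hv 1
  simp only [Nat.cast_one] at hk
  rw [show (2*(1:ℝ)+1) = 3 by norm_num] at hk
  rw [h, hk]
  have hG : Real.Gamma ((3:ℝ)/2) = Real.sqrt Real.pi / 2 := by
    rw [show ((3:ℝ)/2) = 1/2 + 1 by norm_num, Real.Gamma_add_one (by norm_num), Real.Gamma_one_half_eq]
    ring
  have hr : ((2*v)⁻¹ : ℝ) ^ (-(3)/2 : ℝ) = (2*v) * Real.sqrt (2*v) := by
    rw [show (-(3)/2 : ℝ) = -((3:ℝ)/2) by norm_num, rpow_inv_eval hv]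
    rw [show ((3:ℝ)/2) = 1 + 1/2 by norm_num, Real.rpow_add (by positivity), Real.rpow_one,
      ← Real.sqrt_eq_rpow]
  rw [hG, hr, sqrt_two_pi_v hv]
  have h1 : Real.sqrt (2*v) ≠ 0 := by positivity
  have h2 : Real.sqrt Real.pi ≠ 0 := by positivity
  have h3 : Real.sqrt (2*v) * Real.sqrt (2*v) = 2*v := Real.mul_self_sqrt (by positivity)
  field_simp

lemma m1_four {v : ℝ} (hv : 0 < v) : m1 v 4 = 3 * v ^ 2 := by
  have h : m1 v 4 = (Real.sqrt (2 * Real.pi * v))⁻¹ * ∫ t : ℝ, t ^ 4 * Real.exp (-((2*v)⁻¹) * t ^ 2) := by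
    rw [m1, ← integral_const_mul]
    congr 1 with t
    simp [p1]; ring
  have hk := integral_even_moment hv 2
  simp only [Nat.cast_ofNat] at hk
  rw [show (2*(2:ℝ)+1) = 5 by norm_num] at hk
  rw [h, hk]
  have hG3 : Real.Gamma ((3:ℝ)/2) = Real.sqrt Real.pi / 2 := by
    rw [show ((3:ℝ)/2) = 1/2 + 1 by norm_num, Real.Gamma_add_one (by norm_num), Real.Gamma_one_half_eq]
    ring
  have hG : Real.Gamma ((5:ℝ)/2) = 3 * Real.sqrt Real.pi / 4 := by
    rw [show ((5:ℝ)/2) = 3/2 + 1 by norm_num, Real.Gamma_add_one (by norm_num), hG3]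
    ring
  have hr : ((2*v)⁻¹ : ℝ) ^ (-(5)/2 : ℝ) = (2*v)^2 * Real.sqrt (2*v) := by
    rw [show (-(5)/2 : ℝ) = -((5:ℝ)/2) by norm_num, rpow_inv_eval hv]
    rw [show ((5:ℝ)/2) = 2 + 1/2 by norm_num, Real.rpow_add (by positivity),
      ← Real.sqrt_eq_rpow, show ((2:ℝ):ℝ) = ((2:ℕ):ℝ) by norm_num, Real.rpow_natCast]
  rw [hG, hr, sqrt_two_pi_v hv]
  have h1 : Real.sqrt (2*v) ≠ 0 := by positivity
  have h2 : Real.sqrt Real.pi ≠ 0 := by positivity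
  have h3 : Real.sqrt (2*v) * Real.sqrt (2*v) = 2*v := Real.mul_self_sqrt (by positivity)
  field_simp
  nlinarith [h3]

section Multi

variable {d : ℕ}

/-- product density -/
def pd (lam : Fin d → ℝ) (x : Fin d → ℝ) : ℝ := ∏ i, p1 (lam i) (x i)

lemma continuous_pd (lam : Fin d → ℝ) : Continuous (pd lam) :=
  continuous_finset_prod _ fun i _ => (continuous_p1 (lam i)).comp (continuous_apply i)

lemma pd_nonneg (lam : Fin d → ℝ) (x : Fin d → ℝ) : 0 ≤ pd lam x :=
  Finset.prod_nonneg fun i _ => p1_nonneg _ _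

/-- product Gaussian measure with diagonal covariance -/
def nu (lam : Fin d → ℝ) : Measure (Fin d → ℝ) :=
  volume.withDensity fun x => ENNReal.ofReal (pd lam x)

lemma meas_dens (lam : Fin d → ℝ) : Measurable (fun x => ENNReal.ofReal (pd lam x)) :=
  (continuous_pd lam).measurable.ennreal_ofReal

lemma integral_nu (lam : Fin d → ℝ) (g : (Fin d → ℝ) → ℝ) :
    ∫ x, g x ∂(nu lam) = ∫ x, pd lam x * g x := by
  rw [nu]
  rw [show (fun x => ENNReal.ofReal (pd lam x))
      = (fun x => (((pd lam x).toNNReal : NNReal) : ENNReal)) from rfl]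
  rw [integral_withDensity_eq_integral_smul
    ((continuous_pd lam).measurable.real_toNNReal) g]
  congr 1 with x
  simp [NNReal.smul_def, Real.coe_toNNReal _ (pd_nonneg lam x)]

lemma integrable_nu_iff (lam : Fin d → ℝ) (g : (Fin d → ℝ) → ℝ) :
    Integrable g (nu lam) ↔ Integrable (fun x => g x * pd lam x) volume := by
  rw [nu, integrable_withDensity_iff (meas_dens lam)
    (Filter.Eventually.of_forall fun x => ENNReal.ofReal_lt_top)]
  apply integrable_congr
  filter_upwards with x
  rw [ENNReal.toReal_ofReal (pd_nonneg lam x)]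

/-- monomial -/
def pp (n : Fin d → ℕ) (z : Fin d → ℝ) : ℝ := ∏ m, z m ^ n m

lemma integrable_pp {lam : Fin d → ℝ} (hlam : ∀ i, 0 < lam i) (n : Fin d → ℕ) :
    Integrable (pp n) (nu lam) := by
  rw [integrable_nu_iff]
  have h : (fun x : Fin d → ℝ => pp n x * pd lam x)
      = fun x => ∏ i, (fun t => t ^ n i * p1 (lam i) t) (x i) := by
    funext x
    rw [pp, pd, ← Finset.prod_mul_distrib]
  rw [h]
  exact MeasureTheory.Integrable.fintype_prod fun i =>
    (integrable_p1_mul_pow (hlam i) (n i)).congr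
      (Filter.Eventually.of_forall fun t => (mul_comm _ _))

lemma integral_pp {lam : Fin d → ℝ} (hlam : ∀ i, 0 < lam i) (n : Fin d → ℕ) :
    ∫ z, pp n z ∂(nu lam) = ∏ m, m1 (lam m) (n m) := by
  rw [integral_nu]
  have h : (fun x : Fin d → ℝ => pd lam x * pp n x)
      = fun x => ∏ i, (fun t => p1 (lam i) t * t ^ n i) (x i) := by
    funext x
    rw [pp, pd, ← Finset.prod_mul_distrib]
  rw [h]
  exact MeasureTheory.integral_fintype_prod_eq_prod (ι := Fin d)
    (fun i t => p1 (lam i) t * t ^ n i)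

/-- Kronecker exponent -/
def dlt (i : Fin d) : Fin d → ℕ := fun m => if m = i then 1 else 0

lemma pp_add (a b : Fin d → ℕ) (z : Fin d → ℝ) : pp (a + b) z = pp a z * pp b z := by
  rw [pp, pp, pp, ← Finset.prod_mul_distrib]
  exact Finset.prod_congr rfl fun m _ => pow_add _ _ _

lemma pp_dlt (i : Fin d) (z : Fin d → ℝ) : pp (dlt i) z = z i := by
  rw [pp]
  have : ∀ m, z m ^ (dlt i m) = if m = i then z m else 1 := by
    intro m; by_cases h : m = i <;> simp [dlt, h]
  rw [Finset.prod_congr rfl fun m _ => this m, Finset.prod_ite_eq']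
  simp

end Multi

section Moments

variable {d : ℕ} {lam : Fin d → ℝ}

lemma prod_m1_single (hlam : ∀ i, 0 < lam i) (i : Fin d) (a : ℕ) :
    ∏ m, m1 (lam m) (if m = i then a else 0) = m1 (lam i) a := by
  have : ∀ m, m1 (lam m) (if m = i then a else 0)
      = if m = i then m1 (lam m) a else 1 := by
    intro m; by_cases h : m = i <;> simp [h, m1_zero (hlam m)]
  rw [Finset.prod_congr rfl fun m _ => this m, Finset.prod_ite_eq']
  simp

lemma prod_m1_pair (hlam : ∀ i, 0 < lam i) {i j : Fin d} (hij : i ≠ j) (a b : ℕ) :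
    ∏ m, m1 (lam m) ((if m = i then a else 0) + (if m = j then b else 0))
      = m1 (lam i) a * m1 (lam j) b := by
  have : ∀ m, m1 (lam m) ((if m = i then a else 0) + (if m = j then b else 0))
      = (if m = i then m1 (lam m) a else 1) * (if m = j then m1 (lam m) b else 1) := by
    intro m
    by_cases h1 : m = i
    · rw [h1, if_pos rfl, if_pos rfl, if_neg hij, if_neg hij, add_zero, mul_one]
    · by_cases h2 : m = j
      · rw [h2, if_neg (Ne.symm hij), if_neg (Ne.symm hij), if_pos rfl, if_pos rfl,
          zero_add, one_mul]
      · simp [h1, h2, m1_zero (hlam m)]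
  rw [Finset.prod_congr rfl fun m _ => this m, Finset.prod_mul_distrib,
    Finset.prod_ite_eq', Finset.prod_ite_eq']
  simp

lemma mom1 (hlam : ∀ i, 0 < lam i) (i : Fin d) : ∫ z, z i ∂(nu lam) = 0 := by
  have h : (fun z : Fin d → ℝ => z i) = pp (dlt i) := by
    funext z; rw [pp_dlt]
  rw [h, integral_pp hlam]
  refine Finset.prod_eq_zero (Finset.mem_univ i) ?_
  simp [dlt]
  exact m1_odd 1 odd_one

lemma intg1 (hlam : ∀ i, 0 < lam i) (i : Fin d) :
    Integrable (fun z => z i) (nu lam) := by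
  have h : (fun z : Fin d → ℝ => z i) = pp (dlt i) := by
    funext z; rw [pp_dlt]
  rw [h]; exact integrable_pp hlam _

lemma mono2_eq (i j : Fin d) : (fun z : Fin d → ℝ => z i * z j) = pp (dlt i + dlt j) := by
  funext z; rw [pp_add, pp_dlt, pp_dlt]

lemma mom2 (hlam : ∀ i, 0 < lam i) (i j : Fin d) :
    ∫ z, z i * z j ∂(nu lam) = if i = j then lam i else 0 := by
  rw [mono2_eq, integral_pp hlam]
  by_cases hij : i = j
  · subst hij
    rw [if_pos rfl]
    have : ∀ m, m1 (lam m) ((dlt i + dlt i) m) = if m = i then lam m else 1 := by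
      intro m
      by_cases h : m = i
      · rw [h]; simp [dlt, Pi.add_apply, m1_two (hlam i)]
      · simp [dlt, Pi.add_apply, h, m1_zero (hlam m)]
    rw [Finset.prod_congr rfl fun m _ => this m, Finset.prod_ite_eq']
    simp
  · rw [if_neg hij]
    refine Finset.prod_eq_zero (Finset.mem_univ i) ?_
    have hji : ¬ i = j := hij
    simp only [dlt, Pi.add_apply, if_pos rfl, if_neg hji]
    exact m1_odd 1 odd_one

lemma intg2 (hlam : ∀ i, 0 < lam i) (i j : Fin d) :
    Integrable (fun z => z i * z j) (nu lam) := by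
  rw [mono2_eq]; exact integrable_pp hlam _

lemma mono3_eq (i j k : Fin d) :
    (fun z : Fin d → ℝ => z i * z j * z k) = pp (dlt i + dlt j + dlt k) := by
  funext z; rw [pp_add, pp_add, pp_dlt, pp_dlt, pp_dlt]

lemma intg3 (hlam : ∀ i, 0 < lam i) (i j k : Fin d) :
    Integrable (fun z => z i * z j * z k) (nu lam) := by
  rw [mono3_eq]; exact integrable_pp hlam _

lemma mom3 (hlam : ∀ i, 0 < lam i) (i j k : Fin d) :
    ∫ z, z i * z j * z k ∂(nu lam) = 0 := by
  rw [mono3_eq, integral_pp hlam]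
  by_cases hij : i = j
  · subst hij
    by_cases hik : i = k
    · subst hik
      refine Finset.prod_eq_zero (Finset.mem_univ i) ?_
      simp only [dlt, Pi.add_apply, if_pos rfl]
      exact m1_odd 3 (by decide)
    · refine Finset.prod_eq_zero (Finset.mem_univ k) ?_
      have hki : ¬ k = i := fun h => hik h.symm
      simp only [dlt, Pi.add_apply, if_pos rfl, if_neg hki]
      exact m1_odd 1 odd_one
  · by_cases hjk : j = k
    · subst hjk
      refine Finset.prod_eq_zero (Finset.mem_univ i) ?_
      simp only [dlt, Pi.add_apply, if_pos rfl, if_neg hij]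
      exact m1_odd 1 odd_one
    · by_cases hik : i = k
      · refine Finset.prod_eq_zero (Finset.mem_univ j) ?_
        have hji : ¬ j = i := fun h => hij h.symm
        simp only [dlt, Pi.add_apply, if_pos rfl, if_neg hji, if_neg hjk]
        exact m1_odd 1 odd_one
      · refine Finset.prod_eq_zero (Finset.mem_univ i) ?_
        simp only [dlt, Pi.add_apply, if_pos rfl, if_neg hij, if_neg hik]
        exact m1_odd 1 odd_one

end Moments

section Mom4

variable {d : ℕ} {lam : Fin d → ℝ}

lemma mono4_eq (i j k l : Fin d) :
    (fun z : Fin d → ℝ => z i * z j * z k * z l) = pp (dlt i + dlt j + dlt k + dlt l) := by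
  funext z; rw [pp_add, pp_add, pp_add, pp_dlt, pp_dlt, pp_dlt, pp_dlt]

lemma intg4 (hlam : ∀ i, 0 < lam i) (i j k l : Fin d) :
    Integrable (fun z => z i * z j * z k * z l) (nu lam) := by
  rw [mono4_eq]; exact integrable_pp hlam _

lemma mom4 (hlam : ∀ i, 0 < lam i) (i j k l : Fin d) :
    ∫ z, z i * z j * z k * z l ∂(nu lam)
      = (if i = j ∧ k = l then lam i * lam k else 0)
      + (if i = k ∧ j = l then lam i * lam j else 0)
      + (if i = l ∧ j = k then lam i * lam j else 0) := by
  rw [mono4_eq, integral_pp hlam]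
  by_cases hij : i = j
  · obtain rfl := hij
    by_cases hkl : k = l
    · obtain rfl := hkl
      by_cases hik : i = k
      · obtain rfl := hik
        have he : dlt i + dlt i + dlt i + dlt i = (fun m => if m = i then 4 else 0) := by
          funext m
          by_cases hmi : m = i <;> simp [dlt, hmi]
        rw [he, prod_m1_single hlam, m1_four (hlam i)]
        simp
        ring
      · have he : dlt i + dlt i + dlt k + dlt k
            = (fun m => (if m = i then 2 else 0) + (if m = k then 2 else 0)) := by
          funext m
          have hki : ¬ k = i := fun h => hik h.symm
          by_cases hmi : m = i
          · simp [dlt, hmi, hik]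
          · by_cases hmk : m = k <;> simp [dlt, hmi, hmk, hki]
        rw [he, prod_m1_pair hlam hik, m1_two (hlam i), m1_two (hlam k)]
        rw [if_pos (⟨rfl, rfl⟩ : i = i ∧ k = k),
          if_neg (fun (h : i = k ∧ i = k) => hik h.1)]
        ring
    · have hz : ∏ m, m1 (lam m) ((dlt i + dlt i + dlt k + dlt l) m) = 0 := by
        by_cases hki : k = i
        · obtain rfl := hki
          refine Finset.prod_eq_zero (Finset.mem_univ l) ?_
          have hlk : ¬ l = k := fun h => hkl h.symm
          simp only [dlt, Pi.add_apply, if_pos rfl, if_neg hlk]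
          exact m1_odd 1 odd_one
        · refine Finset.prod_eq_zero (Finset.mem_univ k) ?_
          simp only [dlt, Pi.add_apply, if_pos rfl, if_neg hki, if_neg hkl]
          exact m1_odd 1 odd_one
      rw [hz, if_neg (fun (h : i = i ∧ k = l) => hkl h.2),
        if_neg (fun (h : i = k ∧ i = l) => hkl (h.1.symm.trans h.2)),
        if_neg (fun (h : i = l ∧ i = k) => hkl (h.2.symm.trans h.1))]
      ring
  · by_cases hkl : k = l
    · obtain rfl := hkl
      have hz : ∏ m, m1 (lam m) ((dlt i + dlt j + dlt k + dlt k) m) = 0 := by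
        by_cases hik : i = k
        · obtain rfl := hik
          refine Finset.prod_eq_zero (Finset.mem_univ j) ?_
          have hji : ¬ j = i := fun h => hij h.symm
          simp only [dlt, Pi.add_apply, if_pos rfl, if_neg hji]
          exact m1_odd 1 odd_one
        · refine Finset.prod_eq_zero (Finset.mem_univ i) ?_
          simp only [dlt, Pi.add_apply, if_pos rfl, if_neg hij, if_neg hik]
          exact m1_odd 1 odd_one
      rw [hz, if_neg (fun (h : i = j ∧ k = k) => hij h.1),
        if_neg (fun (h : i = k ∧ j = k) => hij (h.1.trans h.2.symm))]
      ring
    · by_cases hik : i = k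
      · obtain rfl := hik
        by_cases hjl : j = l
        · obtain rfl := hjl
          have he : dlt i + dlt j + dlt i + dlt j
              = (fun m => (if m = i then 2 else 0) + (if m = j then 2 else 0)) := by
            funext m
            have hji : ¬ j = i := fun h => hij h.symm
            by_cases hmi : m = i
            · simp [dlt, hmi, hij]
            · by_cases hmj : m = j <;> simp [dlt, hmi, hmj, hji]
          rw [he, prod_m1_pair hlam hij, m1_two (hlam i), m1_two (hlam j)]
          rw [if_neg (fun (h : i = j ∧ i = j) => hij h.1),
            if_pos (⟨rfl, rfl⟩ : i = i ∧ j = j),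
            if_neg (fun (h : i = j ∧ j = i) => hij h.1)]
          ring
        · have hz : ∏ m, m1 (lam m) ((dlt i + dlt j + dlt i + dlt l) m) = 0 := by
            refine Finset.prod_eq_zero (Finset.mem_univ j) ?_
            have hji : ¬ j = i := fun h => hij h.symm
            simp only [dlt, Pi.add_apply, if_pos rfl, if_neg hji, if_neg hjl]
            exact m1_odd 1 odd_one
          rw [hz, if_neg (fun (h : i = j ∧ i = l) => hij h.1),
            if_neg (fun (h : i = i ∧ j = l) => hjl h.2),
            if_neg (fun (h : i = l ∧ j = i) => hij h.2.symm)]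
          ring
      · by_cases hil : i = l
        · obtain rfl := hil
          by_cases hjk : j = k
          · obtain rfl := hjk
            have he : dlt i + dlt j + dlt j + dlt i
                = (fun m => (if m = i then 2 else 0) + (if m = j then 2 else 0)) := by
              funext m
              have hji : ¬ j = i := fun h => hij h.symm
              by_cases hmi : m = i
              · simp [dlt, hmi, hij]
              · by_cases hmj : m = j <;> simp [dlt, hmi, hmj, hji]
            rw [he, prod_m1_pair hlam hij, m1_two (hlam i), m1_two (hlam j)]
            rw [if_neg (fun (h : i = j ∧ j = i) => hij h.1),
              if_pos (⟨rfl, rfl⟩ : i = i ∧ j = j)]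
            ring
          · have hz : ∏ m, m1 (lam m) ((dlt i + dlt j + dlt k + dlt i) m) = 0 := by
              refine Finset.prod_eq_zero (Finset.mem_univ j) ?_
              have hji : ¬ j = i := fun h => hij h.symm
              simp only [dlt, Pi.add_apply, if_pos rfl, if_neg hji, if_neg hjk]
              exact m1_odd 1 odd_one
            rw [hz, if_neg (fun (h : i = j ∧ k = i) => hij h.1),
              if_neg (fun (h : i = k ∧ j = i) => hik h.1),
              if_neg (fun (h : i = i ∧ j = k) => hjk h.2)]
            ring
        · have hz : ∏ m, m1 (lam m) ((dlt i + dlt j + dlt k + dlt l) m) = 0 := by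
            refine Finset.prod_eq_zero (Finset.mem_univ i) ?_
            simp only [dlt, Pi.add_apply, if_pos rfl, if_neg hij, if_neg hik, if_neg hil]
            exact m1_odd 1 odd_one
          rw [hz, if_neg (fun (h : i = j ∧ k = l) => hij h.1),
            if_neg (fun (h : i = k ∧ j = l) => hik h.1),
            if_neg (fun (h : i = l ∧ j = k) => hil h.1)]
          ring

end Mom4

section Core

variable {d : ℕ} {lam : Fin d → ℝ}

lemma nu_prob (hlam : ∀ i, 0 < lam i) : IsProbabilityMeasure (nu lam) := by
  constructor
  rw [nu, withDensity_apply _ MeasurableSet.univ, Measure.restrict_univ]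
  have hint : Integrable (pd lam) volume := by
    have h := integrable_pp (lam := lam) hlam 0
    rw [integrable_nu_iff] at h
    refine h.congr (Filter.Eventually.of_forall fun x => ?_)
    simp [pp, Pi.zero_apply]
  rw [← MeasureTheory.ofReal_integral_eq_lintegral_ofReal hint
    (Filter.Eventually.of_forall fun x => pd_nonneg lam x)]
  have : ∫ x, pd lam x = 1 := by
    have h := integral_pp (lam := lam) hlam 0
    rw [integral_nu] at h
    simp only [pp, Pi.zero_apply, pow_zero, Finset.prod_const_one, mul_one] at h
    rw [h]
    exact Finset.prod_eq_one fun m _ => m1_zero (hlam m)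
  rw [this, ENNReal.ofReal_one]

lemma f_expand (W : Matrix (Fin d) (Fin d) ℝ) (w : Fin d → ℝ) :
    (fun z : Fin d → ℝ => -(1/2 : ℝ) * (z ⬝ᵥ (W *ᵥ z)) + w ⬝ᵥ z)
      = fun z => (∑ p : Fin d × Fin d, (-(1/2 : ℝ) * W p.1 p.2) * (z p.1 * z p.2))
          + ∑ i, w i * z i := by
  funext z
  simp only [dotProduct, mulVec]
  rw [Fintype.sum_prod_type, Finset.mul_sum]
  refine congrArg₂ (· + ·) ?_ rfl
  refine Finset.sum_congr rfl fun i _ => ?_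
  rw [Finset.mul_sum, Finset.mul_sum]
  exact Finset.sum_congr rfl fun j _ => by ring

theorem variance_nu (hlam : ∀ i, 0 < lam i) (W : Matrix (Fin d) (Fin d) ℝ)
    (hW : W.IsSymm) (w : Fin d → ℝ) :
    variance (fun z => -(1/2 : ℝ) * (z ⬝ᵥ (W *ᵥ z)) + w ⬝ᵥ z) (nu lam)
      = (1/2) * (∑ i, ∑ j, lam i * lam j * W i j ^ 2) + ∑ i, lam i * w i ^ 2 := by
  have hprob : IsProbabilityMeasure (nu lam) := nu_prob hlam
  set c : Fin d × Fin d → ℝ := fun p => -(1/2 : ℝ) * W p.1 p.2 with hc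
  set Q : (Fin d → ℝ) → ℝ := fun z => ∑ p : Fin d × Fin d, c p * (z p.1 * z p.2) with hQ
  set L : (Fin d → ℝ) → ℝ := fun z => ∑ i, w i * z i with hL
  set A : ℝ := ∑ i, W i i * lam i with hA
  set B : ℝ := ∑ i, ∑ j, lam i * lam j * W i j ^ 2 with hB
  set C : ℝ := ∑ i, lam i * w i ^ 2 with hC
  have hfQL : (fun z : Fin d → ℝ => -(1/2 : ℝ) * (z ⬝ᵥ (W *ᵥ z)) + w ⬝ᵥ z)
      = fun z => Q z + L z := f_expand W w
  -- integrabilities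
  have hQint : Integrable Q (nu lam) :=
    integrable_finset_sum _ fun p _ => (intg2 hlam p.1 p.2).const_mul _
  have hLint : Integrable L (nu lam) :=
    integrable_finset_sum _ fun i _ => (intg1 hlam i).const_mul _
  -- mean of Q
  have hsumQ : ∑ p : Fin d × Fin d, c p * (if p.1 = p.2 then lam p.1 else 0)
      = -(1/2) * A := by
    rw [Fintype.sum_prod_type]
    simp only [mul_ite, mul_zero, Finset.sum_ite_eq, Finset.mem_univ, if_true]
    rw [hA, Finset.mul_sum]
    exact Finset.sum_congr rfl fun i _ => by rw [hc]; ring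
  have hEQ : ∫ z, Q z ∂(nu lam) = -(1/2) * A := by
    rw [hQ, integral_finset_sum _ fun p _ => (intg2 hlam p.1 p.2).const_mul _]
    rw [← hsumQ]
    refine Finset.sum_congr rfl fun p _ => ?_
    rw [integral_const_mul, mom2 hlam]
  have hEL : ∫ z, L z ∂(nu lam) = 0 := by
    rw [hL, integral_finset_sum _ fun i _ => (intg1 hlam i).const_mul _]
    refine Finset.sum_eq_zero fun i _ => ?_
    rw [integral_const_mul, mom1 hlam, mul_zero]
  have hEf : ∫ z, (-(1/2 : ℝ) * (z ⬝ᵥ (W *ᵥ z)) + w ⬝ᵥ z) ∂(nu lam) = -(1/2) * A := by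
    have := congrFun hfQL
    rw [integral_congr_ae (Filter.Eventually.of_forall fun z => this z),
      integral_add hQint hLint, hEQ, hEL, add_zero]
  -- second moment pieces
  have hQQrep : (fun z => Q z * Q z)
      = fun z => ∑ p : Fin d × Fin d, ∑ q : Fin d × Fin d,
          (c p * c q) * (z p.1 * z p.2 * z q.1 * z q.2) := by
    funext z
    rw [hQ, Finset.sum_mul_sum]
    exact Finset.sum_congr rfl fun p _ => Finset.sum_congr rfl fun q _ => by ring
  have hQQint : Integrable (fun z => Q z * Q z) (nu lam) := by
    rw [hQQrep]
    exact integrable_finset_sum _ fun p _ =>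
      integrable_finset_sum _ fun q _ => (intg4 hlam p.1 p.2 q.1 q.2).const_mul _
  have hEQQ : ∫ z, Q z * Q z ∂(nu lam) = (1/4) * A^2 + (1/2) * B := by
    rw [hQQrep, integral_finset_sum _ fun p _ =>
      integrable_finset_sum _ fun q _ => (intg4 hlam p.1 p.2 q.1 q.2).const_mul _]
    have hstep : ∀ p : Fin d × Fin d,
        ∫ z, ∑ q : Fin d × Fin d, (c p * c q) * (z p.1 * z p.2 * z q.1 * z q.2) ∂(nu lam)
          = ∑ q : Fin d × Fin d, (c p * c q) *
              ((if p.1 = p.2 ∧ q.1 = q.2 then lam p.1 * lam q.1 else 0)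
              + (if p.1 = q.1 ∧ p.2 = q.2 then lam p.1 * lam p.2 else 0)
              + (if p.1 = q.2 ∧ p.2 = q.1 then lam p.1 * lam p.2 else 0)) := by
      intro p
      rw [integral_finset_sum _ fun q _ => (intg4 hlam p.1 p.2 q.1 q.2).const_mul _]
      exact Finset.sum_congr rfl fun q _ => by rw [integral_const_mul, mom4 hlam]
    rw [Finset.sum_congr rfl fun p _ => hstep p]
    have hsplit : ∀ p q : Fin d × Fin d, (c p * c q) *
        ((if p.1 = p.2 ∧ q.1 = q.2 then lam p.1 * lam q.1 else 0)
        + (if p.1 = q.1 ∧ p.2 = q.2 then lam p.1 * lam p.2 else 0)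
        + (if p.1 = q.2 ∧ p.2 = q.1 then lam p.1 * lam p.2 else 0))
        = (c p * (if p.1 = p.2 then lam p.1 else 0)) * (c q * (if q.1 = q.2 then lam q.1 else 0))
          + (if p = q then (c p * c q) * (lam p.1 * lam p.2) else 0)
          + (if (p.2, p.1) = q then (c p * c q) * (lam p.1 * lam p.2) else 0) := by
      intro p q
      have h2 : (if p.1 = q.1 ∧ p.2 = q.2 then lam p.1 * lam p.2 else 0)
          = (if p = q then lam p.1 * lam p.2 else 0) := by
        refine if_congr ?_ rfl rfl
        exact (Prod.ext_iff).symm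
      have h3 : (if p.1 = q.2 ∧ p.2 = q.1 then lam p.1 * lam p.2 else 0)
          = (if (p.2, p.1) = q then lam p.1 * lam p.2 else 0) := by
        refine if_congr ?_ rfl rfl
        rw [Prod.ext_iff]
        constructor
        · rintro ⟨a, b⟩; exact ⟨b, a⟩
        · rintro ⟨a, b⟩; exact ⟨b, a⟩
      have t1 : (c p * c q) * (if p.1 = p.2 ∧ q.1 = q.2 then lam p.1 * lam q.1 else 0)
          = (c p * (if p.1 = p.2 then lam p.1 else 0)) * (c q * (if q.1 = q.2 then lam q.1 else 0)) := by
        by_cases ha : p.1 = p.2 <;> by_cases hb : q.1 = q.2 <;> simp [ha, hb] <;> ring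
      have t2 : (c p * c q) * (if p = q then lam p.1 * lam p.2 else 0)
          = (if p = q then (c p * c q) * (lam p.1 * lam p.2) else 0) := by
        rw [mul_ite, mul_zero]
      have t3 : (c p * c q) * (if (p.2, p.1) = q then lam p.1 * lam p.2 else 0)
          = (if (p.2, p.1) = q then (c p * c q) * (lam p.1 * lam p.2) else 0) := by
        rw [mul_ite, mul_zero]
      rw [h2, h3, mul_add, mul_add, t1, t2, t3]
    rw [Finset.sum_congr rfl fun p _ => Finset.sum_congr rfl fun q _ => hsplit p q]
    simp only [Finset.sum_add_distrib]
    have e1 : ∑ p : Fin d × Fin d, ∑ q : Fin d × Fin d,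
        (c p * (if p.1 = p.2 then lam p.1 else 0)) * (c q * (if q.1 = q.2 then lam q.1 else 0))
        = (1/4) * A^2 := by
      rw [← Finset.sum_mul_sum, hsumQ]
      ring
    have e2 : ∑ p : Fin d × Fin d, ∑ q : Fin d × Fin d,
        (if p = q then (c p * c q) * (lam p.1 * lam p.2) else 0) = (1/4) * B := by
      have : ∀ p : Fin d × Fin d, ∑ q : Fin d × Fin d,
          (if p = q then (c p * c q) * (lam p.1 * lam p.2) else 0)
          = (c p * c p) * (lam p.1 * lam p.2) := fun p => by
        rw [Finset.sum_ite_eq]; simp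
      rw [Finset.sum_congr rfl fun p _ => this p, hB, Fintype.sum_prod_type, Finset.mul_sum]
      refine Finset.sum_congr rfl fun i _ => ?_
      rw [Finset.mul_sum]
      refine Finset.sum_congr rfl fun j _ => ?_
      rw [hc]
      ring
    have e3 : ∑ p : Fin d × Fin d, ∑ q : Fin d × Fin d,
        (if (p.2, p.1) = q then (c p * c q) * (lam p.1 * lam p.2) else 0) = (1/4) * B := by
      have : ∀ p : Fin d × Fin d, ∑ q : Fin d × Fin d,
          (if (p.2, p.1) = q then (c p * c q) * (lam p.1 * lam p.2) else 0)
          = (c p * c (p.2, p.1)) * (lam p.1 * lam p.2) := fun p => by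
        rw [Finset.sum_ite_eq]; simp
      rw [Finset.sum_congr rfl fun p _ => this p, hB, Fintype.sum_prod_type, Finset.mul_sum]
      refine Finset.sum_congr rfl fun i _ => ?_
      rw [Finset.mul_sum]
      refine Finset.sum_congr rfl fun j _ => ?_
      rw [hc]
      simp only
      rw [hW.apply i j]
      ring
    rw [e1, e2, e3]
    ring
  -- Q * L
  have hQLrep : (fun z => Q z * L z)
      = fun z => ∑ p : Fin d × Fin d, ∑ i,
          (c p * w i) * (z p.1 * z p.2 * z i) := by
    funext z
    rw [hQ, hL, Finset.sum_mul_sum]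
    exact Finset.sum_congr rfl fun p _ => Finset.sum_congr rfl fun i _ => by ring
  have hQLint : Integrable (fun z => Q z * L z) (nu lam) := by
    rw [hQLrep]
    exact integrable_finset_sum _ fun p _ =>
      integrable_finset_sum _ fun i _ => (intg3 hlam p.1 p.2 i).const_mul _
  have hEQL : ∫ z, Q z * L z ∂(nu lam) = 0 := by
    rw [hQLrep, integral_finset_sum _ fun p _ =>
      integrable_finset_sum _ fun i _ => (intg3 hlam p.1 p.2 i).const_mul _]
    refine Finset.sum_eq_zero fun p _ => ?_
    rw [integral_finset_sum _ fun i _ => (intg3 hlam p.1 p.2 i).const_mul _]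
    refine Finset.sum_eq_zero fun i _ => ?_
    rw [integral_const_mul, mom3 hlam, mul_zero]
  -- L * L
  have hLLrep : (fun z => L z * L z)
      = fun z => ∑ i, ∑ j, (w i * w j) * (z i * z j) := by
    funext z
    rw [hL, Finset.sum_mul_sum]
    exact Finset.sum_congr rfl fun i _ => Finset.sum_congr rfl fun j _ => by ring
  have hLLint : Integrable (fun z => L z * L z) (nu lam) := by
    rw [hLLrep]
    exact integrable_finset_sum _ fun i _ =>
      integrable_finset_sum _ fun j _ => (intg2 hlam i j).const_mul _
  have hELL : ∫ z, L z * L z ∂(nu lam) = C := by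
    rw [hLLrep, integral_finset_sum _ fun i _ =>
      integrable_finset_sum _ fun j _ => (intg2 hlam i j).const_mul _]
    have : ∀ i, ∫ z, ∑ j, (w i * w j) * (z i * z j) ∂(nu lam) = lam i * w i ^ 2 := by
      intro i
      rw [integral_finset_sum _ fun j _ => (intg2 hlam i j).const_mul _]
      have : ∀ j, ∫ z, (w i * w j) * (z i * z j) ∂(nu lam)
          = if i = j then (w i * w j) * lam i else 0 := by
        intro j
        rw [integral_const_mul, mom2 hlam]
        by_cases h : i = j <;> simp [h]
      rw [Finset.sum_congr rfl fun j _ => this j, Finset.sum_ite_eq]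
      simp
      ring
    rw [Finset.sum_congr rfl fun i _ => this i]
  -- f squared
  have hf2 : (fun z : Fin d → ℝ => (-(1/2 : ℝ) * (z ⬝ᵥ (W *ᵥ z)) + w ⬝ᵥ z) ^ 2)
      = fun z => Q z * Q z + 2 * (Q z * L z) + L z * L z := by
    funext z
    rw [congrFun hfQL z]
    ring
  have hf2int : Integrable
      (fun z : Fin d → ℝ => (-(1/2 : ℝ) * (z ⬝ᵥ (W *ᵥ z)) + w ⬝ᵥ z) ^ 2) (nu lam) := by
    rw [hf2]
    have i1 : Integrable (fun z => Q z * Q z + 2 * (Q z * L z)) (nu lam) :=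
      hQQint.add (hQLint.const_mul 2)
    exact i1.add hLLint
  have hEf2 : ∫ z, (-(1/2 : ℝ) * (z ⬝ᵥ (W *ᵥ z)) + w ⬝ᵥ z) ^ 2 ∂(nu lam)
      = (1/4) * A^2 + (1/2) * B + C := by
    have i1 : Integrable (fun z => Q z * Q z + 2 * (Q z * L z)) (nu lam) :=
      hQQint.add (hQLint.const_mul 2)
    rw [show (fun z : Fin d → ℝ => (-(1/2 : ℝ) * (z ⬝ᵥ (W *ᵥ z)) + w ⬝ᵥ z) ^ 2)
        = fun z => Q z * Q z + 2 * (Q z * L z) + L z * L z from hf2]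
    rw [integral_add i1 hLLint, integral_add hQQint (hQLint.const_mul 2),
      integral_const_mul, hEQQ, hEQL, hELL]
    ring
  -- continuity / memLp
  have hfc : Continuous (fun z : Fin d → ℝ => -(1/2 : ℝ) * (z ⬝ᵥ (W *ᵥ z)) + w ⬝ᵥ z) := by
    rw [hfQL]
    exact (continuous_finset_sum _ fun p _ =>
        continuous_const.mul ((continuous_apply p.1).mul (continuous_apply p.2))).add
      (continuous_finset_sum _ fun i _ => continuous_const.mul (continuous_apply i))
  have hmem : MemLp (fun z : Fin d → ℝ => -(1/2 : ℝ) * (z ⬝ᵥ (W *ᵥ z)) + w ⬝ᵥ z) 2 (nu lam) := by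
    rw [memLp_two_iff_integrable_sq (hfc.aestronglyMeasurable)]
    exact hf2int
  rw [variance_eq_sub hmem]
  have h1 : ∫ z, ((fun z : Fin d → ℝ => -(1/2 : ℝ) * (z ⬝ᵥ (W *ᵥ z)) + w ⬝ᵥ z) ^ 2) z ∂(nu lam)
      = (1/4) * A^2 + (1/2) * B + C := by
    rw [← hEf2]
    rfl
  rw [h1, hEf]
  try ring
end Core

section Transport

variable {d : ℕ}

lemma measurable_mulVecFun (M : Matrix (Fin d) (Fin d) ℝ) :
    Measurable (fun x : Fin d → ℝ => M *ᵥ x) := by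
  refine measurable_pi_lambda _ fun i => ?_
  have : (fun x : Fin d → ℝ => (M *ᵥ x) i) = fun x => ∑ j, M i j * x j := by
    funext x; simp [Matrix.mulVec, dotProduct]
  rw [this]
  exact Finset.measurable_sum _ fun j _ => by fun_prop

/-- measurable equivalence given by multiplication with an orthogonal matrix -/
def mulVecEquiv (Qm : Matrix (Fin d) (Fin d) ℝ) (h1 : star Qm * Qm = 1)
    (h2 : Qm * star Qm = 1) : (Fin d → ℝ) ≃ᵐ (Fin d → ℝ) where
  toFun := fun x => Qm *ᵥ x
  invFun := fun x => star Qm *ᵥ x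
  left_inv := fun x => by
    show star Qm *ᵥ (Qm *ᵥ x) = x
    rw [Matrix.mulVec_mulVec, h1, Matrix.one_mulVec]
  right_inv := fun x => by
    show Qm *ᵥ (star Qm *ᵥ x) = x
    rw [Matrix.mulVec_mulVec, h2, Matrix.one_mulVec]
  measurable_toFun := measurable_mulVecFun Qm
  measurable_invFun := measurable_mulVecFun (star Qm)

lemma variance_comp (e : (Fin d → ℝ) ≃ᵐ (Fin d → ℝ)) {X : (Fin d → ℝ) → ℝ}
    (hX : Measurable X) (μ : Measure (Fin d → ℝ)) :
    variance X (Measure.map e μ) = variance (fun x => X (e x)) μ := by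
  unfold ProbabilityTheory.variance ProbabilityTheory.evariance
  rw [integral_map e.measurable.aemeasurable hX.aestronglyMeasurable]
  rw [lintegral_map (f := fun ω => ‖X ω - ∫ x, X (e x) ∂μ‖ₑ ^ 2) (((hX.sub measurable_const).enorm).pow_const 2)
    e.measurable]

lemma map_withDensity_equiv (e : (Fin d → ℝ) ≃ᵐ (Fin d → ℝ)) (f : (Fin d → ℝ) → ENNReal)
    (hf : Measurable f) :
    Measure.map e (volume.withDensity fun x => f (e x))
      = (Measure.map e volume).withDensity f := by
  ext s hs
  rw [Measure.map_apply e.measurable hs, withDensity_apply _ (e.measurable hs),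
    withDensity_apply _ hs, setLIntegral_map hs hf e.measurable]

lemma sqrt_prod_fin {f : Fin d → ℝ} (hf : ∀ i, 0 ≤ f i) :
    Real.sqrt (∏ i, f i) = ∏ i, Real.sqrt (f i) := by
  classical
  have : ∀ s : Finset (Fin d), Real.sqrt (∏ i ∈ s, f i) = ∏ i ∈ s, Real.sqrt (f i) := by
    intro s
    induction s using Finset.induction_on with
    | empty => simp
    | insert a s hnotmem ih =>
        rw [Finset.prod_insert hnotmem, Finset.prod_insert hnotmem,
          Real.sqrt_mul (hf _), ih]
  exact this Finset.univ

end Transport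

section MainAssembly

variable {d : ℕ} {Sg : Matrix (Fin d) (Fin d) ℝ}

lemma continuous_quadlin (W : Matrix (Fin d) (Fin d) ℝ) (w : Fin d → ℝ) :
    Continuous (fun z : Fin d → ℝ => -(1/2 : ℝ) * (z ⬝ᵥ (W *ᵥ z)) + w ⬝ᵥ z) := by
  rw [f_expand]
  exact (continuous_finset_sum _ fun p _ =>
      continuous_const.mul ((continuous_apply p.1).mul (continuous_apply p.2))).add
    (continuous_finset_sum _ fun i _ => continuous_const.mul (continuous_apply i))

lemma unit_h1 (hH : Sg.IsHermitian) :
    star (hH.eigenvectorUnitary : Matrix (Fin d) (Fin d) ℝ)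
      * (hH.eigenvectorUnitary : Matrix (Fin d) (Fin d) ℝ) = 1 :=
  Matrix.mem_unitaryGroup_iff'.mp hH.eigenvectorUnitary.2

lemma unit_h2 (hH : Sg.IsHermitian) :
    (hH.eigenvectorUnitary : Matrix (Fin d) (Fin d) ℝ)
      * star (hH.eigenvectorUnitary : Matrix (Fin d) (Fin d) ℝ) = 1 :=
  Matrix.mem_unitaryGroup_iff.mp hH.eigenvectorUnitary.2

lemma star_eq_tr (Qm : Matrix (Fin d) (Fin d) ℝ) : star Qm = Qmᵀ := by
  rw [Matrix.star_eq_conjTranspose, Matrix.conjTranspose_eq_transpose_of_trivial]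

lemma gpdf_factor (hSg : Sg.PosDef) (x : Fin d → ℝ) :
    gpdf 0 Sg x = pd hSg.1.eigenvalues
      (star (hSg.1.eigenvectorUnitary : Matrix (Fin d) (Fin d) ℝ) *ᵥ x) := by
  classical
  set lam := hSg.1.eigenvalues with hlamdef
  set Qm : Matrix (Fin d) (Fin d) ℝ := (hSg.1.eigenvectorUnitary : Matrix (Fin d) (Fin d) ℝ)
    with hQmdef
  have hlam : ∀ i, 0 < lam i := fun i => hSg.eigenvalues_pos i
  have h1 : star Qm * Qm = 1 := unit_h1 hSg.1
  have h2 : Qm * star Qm = 1 := unit_h2 hSg.1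
  have hspec : Sg = Qm * Matrix.diagonal lam * star Qm := by
    simpa using hSg.1.spectral_theorem
  have hdet : Sg.det = ∏ i, lam i := by simpa using hSg.1.det_eq_prod_eigenvalues
  have hDD : Matrix.diagonal lam * Matrix.diagonal (fun i => (lam i)⁻¹)
      = (1 : Matrix (Fin d) (Fin d) ℝ) := by
    rw [Matrix.diagonal_mul_diagonal,
      show (fun i => lam i * (lam i)⁻¹) = fun _ => (1:ℝ) from
        funext fun i => mul_inv_cancel₀ (hlam i).ne', Matrix.diagonal_one]
  have hinv : Sg⁻¹ = Qm * Matrix.diagonal (fun i => (lam i)⁻¹) * star Qm := by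
    apply Matrix.inv_eq_right_inv
    conv_lhs => rw [hspec]
    have ha : Qm * Matrix.diagonal lam * star Qm
        * (Qm * Matrix.diagonal (fun i => (lam i)⁻¹) * star Qm)
        = Qm * (Matrix.diagonal lam * ((star Qm * Qm)
            * (Matrix.diagonal (fun i => (lam i)⁻¹) * star Qm))) := by
      simp only [Matrix.mul_assoc]
    rw [ha, h1, Matrix.one_mul, ← Matrix.mul_assoc (Matrix.diagonal lam), hDD,
      Matrix.one_mul, h2]
  have hquad : x ⬝ᵥ (Sg⁻¹ *ᵥ x) = ∑ i, (lam i)⁻¹ * ((star Qm *ᵥ x) i)^2 := by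
    rw [hinv]
    have hb : (Qm * Matrix.diagonal (fun i => (lam i)⁻¹) * star Qm) *ᵥ x
        = Qm *ᵥ (Matrix.diagonal (fun i => (lam i)⁻¹) *ᵥ (star Qm *ᵥ x)) := by
      rw [Matrix.mulVec_mulVec, Matrix.mulVec_mulVec]
    rw [hb, Matrix.dotProduct_mulVec]
    have hxQ : x ᵥ* Qm = star Qm *ᵥ x := by
      rw [star_eq_tr, Matrix.mulVec_transpose]
    rw [hxQ, dotProduct]
    refine Finset.sum_congr rfl fun i _ => ?_
    rw [Matrix.mulVec_diagonal]
    ring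
  rw [gpdf, sub_zero, hdet, hquad]
  have hnorm : (2 * Real.pi) ^ d * ∏ i, lam i = ∏ i, (2 * Real.pi * lam i) := by
    rw [Finset.prod_mul_distrib, Finset.prod_const, Finset.card_univ, Fintype.card_fin]
  rw [hnorm, sqrt_prod_fin (fun i => by have := hlam i; positivity), ← Finset.prod_inv_distrib]
  have hexp : -(1/2 : ℝ) * ∑ i, (lam i)⁻¹ * ((star Qm *ᵥ x) i)^2
      = ∑ i, -((2 * lam i)⁻¹) * ((star Qm *ᵥ x) i)^2 := by
    rw [Finset.mul_sum]
    refine Finset.sum_congr rfl fun i _ => ?_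
    rw [mul_inv]
    ring
  rw [hexp, Real.exp_sum, ← Finset.prod_mul_distrib]
  rfl

lemma gauss_eq_map (hSg : Sg.PosDef) :
    gauss 0 Sg = Measure.map
      (mulVecEquiv (hSg.1.eigenvectorUnitary : Matrix (Fin d) (Fin d) ℝ)
        (unit_h1 hSg.1) (unit_h2 hSg.1))
      (nu hSg.1.eigenvalues) := by
  classical
  set lam := hSg.1.eigenvalues
  set Qm : Matrix (Fin d) (Fin d) ℝ := (hSg.1.eigenvectorUnitary : Matrix (Fin d) (Fin d) ℝ)
    with hQmdef
  set e := mulVecEquiv Qm (unit_h1 hSg.1) (unit_h2 hSg.1) with hedef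
  have hgcont : Continuous (gpdf 0 Sg) := by
    unfold gpdf
    refine continuous_const.mul (Real.continuous_exp.comp (continuous_const.mul ?_))
    simp only [sub_zero, dotProduct, Matrix.mulVec]
    refine continuous_finset_sum _ fun i _ => (continuous_apply i).mul ?_
    exact continuous_finset_sum _ fun j _ =>
      continuous_const.mul (continuous_apply j)
  have hgm : Measurable fun t => ENNReal.ofReal (gpdf 0 Sg t) :=
    hgcont.measurable.ennreal_ofReal
  have hpdf : ∀ y, pd lam y = gpdf 0 Sg (Qm *ᵥ y) := fun y => by
    rw [gpdf_factor hSg, Matrix.mulVec_mulVec, unit_h1 hSg.1, Matrix.one_mulVec]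
  have hdens : (fun x => ENNReal.ofReal (pd lam x))
      = fun x => (fun t => ENNReal.ofReal (gpdf 0 Sg t)) (e x) := by
    funext x
    show ENNReal.ofReal (pd lam x) = ENNReal.ofReal (gpdf 0 Sg (Qm *ᵥ x))
    rw [hpdf]
  have hcoe : ⇑e = ⇑(Matrix.toLin' Qm) :=
    funext fun x => ((Matrix.toLin'_apply Qm x).symm : Qm *ᵥ x = Matrix.toLin' Qm x)
  have hdet2 : Qm.det * Qm.det = 1 := by
    have hdstar : (star Qm).det = Qm.det := by rw [star_eq_tr, Matrix.det_transpose]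
    have hc := congrArg Matrix.det (unit_h1 hSg.1)
    rwa [Matrix.det_mul, hdstar, Matrix.det_one] at hc
  have hdetne : Qm.det ≠ 0 := fun h => by simp [h] at hdet2
  have habs : |Qm.det| = 1 := by
    rcases mul_self_eq_one_iff.mp hdet2 with h | h <;> simp [h]
  have hvol : Measure.map (⇑e) volume = volume := by
    rw [hcoe, Real.map_matrix_volume_pi_eq_smul_volume_pi hdetne, abs_inv, habs]
    simp
  rw [nu, hdens, map_withDensity_equiv e _ hgm, hvol]
  rfl

lemma gauss_prob (hSg : Sg.PosDef) : IsProbabilityMeasure (gauss 0 Sg) := by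
  rw [gauss_eq_map hSg]
  haveI := nu_prob (fun i => hSg.eigenvalues_pos i)
  exact Measure.isProbabilityMeasure_map (mulVecEquiv _ (unit_h1 hSg.1)
    (unit_h2 hSg.1)).measurable.aemeasurable

theorem main1 (hd : 1 ≤ d) (Sg : Matrix (Fin d) (Fin d) ℝ) (hSg : Sg.PosDef)
    (U : Matrix (Fin d) (Fin d) ℝ) (hU : U.IsSymm) (v : Fin d → ℝ) :
    (1 / 2) * lambdaM Sg hSg.1 * (fnorm U ^ 2 + vnorm v ^ 2) ≤
      variance (fun z => -(1 / 2) * (z ⬝ᵥ (U *ᵥ z)) + v ⬝ᵥ z) (gauss 0 Sg) := by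
  classical
  haveI : Nonempty (Fin d) := Fin.pos_iff_nonempty.mp (by omega)
  set lam := hSg.1.eigenvalues with hlamdef
  set Qm : Matrix (Fin d) (Fin d) ℝ := (hSg.1.eigenvectorUnitary : Matrix (Fin d) (Fin d) ℝ)
    with hQmdef
  have hlam : ∀ i, 0 < lam i := fun i => hSg.eigenvalues_pos i
  set e := mulVecEquiv Qm (unit_h1 hSg.1) (unit_h2 hSg.1) with hedef
  have hQQ : Qm * Qmᵀ = 1 := by rw [← star_eq_tr]; exact unit_h2 hSg.1
  set W : Matrix (Fin d) (Fin d) ℝ := Qmᵀ * U * Qm with hWdef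
  set wv : Fin d → ℝ := Qmᵀ *ᵥ v with hwvdef
  have hXc : Continuous (fun z : Fin d → ℝ => -(1/2 : ℝ) * (z ⬝ᵥ (U *ᵥ z)) + v ⬝ᵥ z) :=
    continuous_quadlin U v
  rw [gauss_eq_map hSg, variance_comp _ hXc.measurable]
  have hcomp : (fun x => (fun z : Fin d → ℝ => -(1/2 : ℝ) * (z ⬝ᵥ (U *ᵥ z)) + v ⬝ᵥ z) (e x))
      = fun z => -(1/2 : ℝ) * (z ⬝ᵥ (W *ᵥ z)) + wv ⬝ᵥ z := by
    funext z
    show -(1/2 : ℝ) * ((Qm *ᵥ z) ⬝ᵥ (U *ᵥ (Qm *ᵥ z))) + v ⬝ᵥ (Qm *ᵥ z) = _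
    have hq : (Qm *ᵥ z) ⬝ᵥ (U *ᵥ (Qm *ᵥ z)) = z ⬝ᵥ (W *ᵥ z) := by
      rw [Matrix.mulVec_mulVec, Matrix.dotProduct_mulVec, ← Matrix.mulVec_transpose,
        Matrix.mulVec_mulVec, dotProduct_comm]
      congr 2
      rw [Matrix.transpose_mul, hU.eq, hWdef]
    have hl : v ⬝ᵥ (Qm *ᵥ z) = wv ⬝ᵥ z := by
      rw [Matrix.dotProduct_mulVec, ← Matrix.mulVec_transpose]
    rw [hq, hl]
  rw [hcomp]
  have hWs : W.IsSymm := by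
    show Wᵀ = W
    rw [hWdef, Matrix.transpose_mul, Matrix.transpose_mul, Matrix.transpose_transpose,
      hU.eq, ← Matrix.mul_assoc]
  rw [variance_nu hlam W hWs wv]
  have hfU : fnorm U ^ 2 = ∑ i, ∑ j, U i j ^ 2 := by
    rw [fnorm, Real.sq_sqrt (by positivity)]
  have hvv : vnorm v ^ 2 = ∑ i, v i ^ 2 := by
    rw [vnorm, Real.sq_sqrt (by positivity)]
  have hsumsq : ∀ (A : Matrix (Fin d) (Fin d) ℝ),
      ∑ i, ∑ j, A i j ^ 2 = Matrix.trace (Aᵀ * A) := by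
    intro A
    calc ∑ i, ∑ j, A i j ^ 2 = ∑ j, ∑ i, A i j ^ 2 := Finset.sum_comm
      _ = Matrix.trace (Aᵀ * A) := by
          simp [Matrix.trace, Matrix.diag, Matrix.mul_apply, Matrix.transpose_apply, pow_two]
  have hWfro : ∑ i, ∑ j, W i j ^ 2 = ∑ i, ∑ j, U i j ^ 2 := by
    rw [hsumsq, hsumsq]
    have hWT : Wᵀ * W = Qmᵀ * (Uᵀ * U) * Qm := by
      have ht : Wᵀ = Qmᵀ * Uᵀ * Qm := by
        rw [hWdef, Matrix.transpose_mul, Matrix.transpose_mul, Matrix.transpose_transpose,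
          ← Matrix.mul_assoc]
      rw [ht, hWdef]
      calc (Qmᵀ * Uᵀ * Qm) * (Qmᵀ * U * Qm)
          = Qmᵀ * (Uᵀ * ((Qm * Qmᵀ) * (U * Qm))) := by simp only [Matrix.mul_assoc]
        _ = Qmᵀ * (Uᵀ * U) * Qm := by
            rw [hQQ, Matrix.one_mul]
            simp only [Matrix.mul_assoc]
    rw [hWT, Matrix.trace_mul_comm, ← Matrix.mul_assoc, hQQ, Matrix.one_mul]
  have hwv : ∑ i, wv i ^ 2 = ∑ i, v i ^ 2 := by
    have ha : ∑ i, wv i ^ 2 = wv ⬝ᵥ wv := by simp [dotProduct, pow_two]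
    have hb : ∑ i, v i ^ 2 = v ⬝ᵥ v := by simp [dotProduct, pow_two]
    rw [ha, hb]
    calc wv ⬝ᵥ wv = (v ᵥ* Qm) ⬝ᵥ (Qmᵀ *ᵥ v) := by
          rw [hwvdef, Matrix.mulVec_transpose]
      _ = v ⬝ᵥ (Qm *ᵥ (Qmᵀ *ᵥ v)) := (Matrix.dotProduct_mulVec v Qm _).symm
      _ = v ⬝ᵥ v := by rw [Matrix.mulVec_mulVec, hQQ, Matrix.one_mulVec]
  have hlM : lambdaM Sg hSg.1 = min (⨅ p : Fin d × Fin d, lam p.1 * lam p.2) (⨅ i, lam i) := rfl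
  have hpair : ∀ i j, lambdaM Sg hSg.1 ≤ lam i * lam j := fun i j => by
    rw [hlM]
    exact le_trans (min_le_left _ _) (ciInf_le ((Set.finite_range _).bddBelow) (i, j))
  have hone : ∀ i, lambdaM Sg hSg.1 ≤ lam i := fun i => by
    rw [hlM]
    exact le_trans (min_le_right _ _) (ciInf_le ((Set.finite_range _).bddBelow) i)
  have hMnn : 0 ≤ lambdaM Sg hSg.1 := by
    rw [hlM]
    exact le_min (le_ciInf fun p => (mul_pos (hlam p.1) (hlam p.2)).le)
      (le_ciInf fun i => (hlam i).le)
  have t1 : lambdaM Sg hSg.1 * (∑ i, ∑ j, W i j ^ 2) ≤ ∑ i, ∑ j, lam i * lam j * W i j ^ 2 := by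
    rw [Finset.mul_sum]
    refine Finset.sum_le_sum fun i _ => ?_
    rw [Finset.mul_sum]
    exact Finset.sum_le_sum fun j _ => mul_le_mul_of_nonneg_right (hpair i j) (sq_nonneg _)
  have t2 : lambdaM Sg hSg.1 * (∑ i, wv i ^ 2) ≤ ∑ i, lam i * wv i ^ 2 := by
    rw [Finset.mul_sum]
    exact Finset.sum_le_sum fun i _ => mul_le_mul_of_nonneg_right (hone i) (sq_nonneg _)
  have t3 : 0 ≤ lambdaM Sg hSg.1 * ∑ i, wv i ^ 2 :=
    mul_nonneg hMnn (by positivity)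
  rw [hfU, hvv, ← hWfro, ← hwv]
  have expand : (1/2 : ℝ) * lambdaM Sg hSg.1 * ((∑ i, ∑ j, W i j ^ 2) + ∑ i, wv i ^ 2)
      = 1/2 * (lambdaM Sg hSg.1 * (∑ i, ∑ j, W i j ^ 2))
        + 1/2 * (lambdaM Sg hSg.1 * ∑ i, wv i ^ 2) := by ring
  linarith [t1, t2, t3, expand]

end MainAssembly

/-- For symmetric positive definite `Σ`, every symmetric `U` and every `v`,
`Var_{z∼N(0,Σ)}[−(1/2)zᵀUz + vᵀz] ≥ (1/2) λ_m(Σ) (‖U‖_F² + ‖v‖₂²)`.  Consequently, in the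
untruncated case `S = ℝ^d`, the Hessian of the negative log-likelihood at any `(ν,T)` with
`ν = 0` — i.e. the covariance quadratic form of `t(z)` under `N(T⁻¹·0, T⁻¹, ℝ^d)` — restricted
to directions `(U^♭,v)` with `U` symmetric, is bounded below by `(1/2) λ_m(T⁻¹)` times the
identity quadratic form. -/
theorem statement6 {d : ℕ} (hd : 1 ≤ d) :
    (∀ (Sg : Matrix (Fin d) (Fin d) ℝ) (hSg : Sg.PosDef)
      (U : Matrix (Fin d) (Fin d) ℝ), U.IsSymm → ∀ v : Fin d → ℝ,
      (1 / 2) * lambdaM Sg hSg.1 * (fnorm U ^ 2 + vnorm v ^ 2) ≤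
        variance (fun z => -(1 / 2) * (z ⬝ᵥ (U *ᵥ z)) + v ⬝ᵥ z) (gauss 0 Sg)) ∧
    (∀ (T : Matrix (Fin d) (Fin d) ℝ) (hT : T.PosDef)
      (U : Matrix (Fin d) (Fin d) ℝ), U.IsSymm → ∀ v : Fin d → ℝ,
      (1 / 2) * lambdaM T⁻¹ hT.inv.1 * (fnorm U ^ 2 + vnorm v ^ 2) ≤
        variance (fun z => -(1 / 2) * (z ⬝ᵥ (U *ᵥ z)) + v ⬝ᵥ z)
          (truncGauss (T⁻¹ *ᵥ 0) T⁻¹ Set.univ)) := by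
  constructor
  · exact fun Sg hSg U hU v => main1 hd Sg hSg U hU v
  · intro T hT U hU v
    have h0 : T⁻¹ *ᵥ (0 : Fin d → ℝ) = 0 := Matrix.mulVec_zero _
    rw [truncGauss, h0]
    haveI := gauss_prob hT.inv
    rw [ProbabilityTheory.cond_univ]
    exact main1 hd T⁻¹ hT.inv U hU v

end
end

section
/- Let μ ∈ ℝ^d, let Σ be symmetric positive definite, and let S ⊆ ℝ^d be measurable with N(μ,Σ;S) ≥ α for some α ∈ (0,1]. Then the mean μ_S of the truncated normal N(μ,Σ,S) satisfies ‖μ_S − μ‖_Σ ≤ √(2 log(1/α)) + 1. -/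
open MeasureTheory ProbabilityTheory Matrix Real

noncomputable section

section helpers
variable {d : ℕ} (μ : Fin d → ℝ) (Sg : Matrix (Fin d) (Fin d) ℝ) (hSg : Sg.PosDef)

lemma conj_dot (B M : Matrix (Fin d) (Fin d) ℝ) (y : Fin d → ℝ) :
    (B *ᵥ y) ⬝ᵥ (M *ᵥ (B *ᵥ y)) = y ⬝ᵥ ((Bᵀ * M * B) *ᵥ y) := by
  simp [Matrix.dotProduct_mulVec, Matrix.mulVec_mulVec, Matrix.vecMul_mulVec, Matrix.mul_assoc]

lemma dot_mulVec_symm (w v : Fin d → ℝ) (B : Matrix (Fin d) (Fin d) ℝ) :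
    w ⬝ᵥ (B *ᵥ v) = (Bᵀ *ᵥ w) ⬝ᵥ v := by
  rw [Matrix.dotProduct_mulVec, Matrix.mulVec_transpose]

lemma continuous_gpdf : Continuous (gpdf μ Sg) := by
  unfold gpdf
  refine continuous_const.mul (Real.continuous_exp.comp (continuous_const.mul ?_))
  simp only [dotProduct, Matrix.mulVec]
  refine continuous_finset_sum _ fun i _ => Continuous.mul ?_ (continuous_finset_sum _ fun j _ => ?_)
  · exact ((continuous_apply i).sub continuous_const)
  · exact continuous_const.mul ((continuous_apply j).sub continuous_const)

lemma gpdf_nonneg (x : Fin d → ℝ) : 0 ≤ gpdf μ Sg x := by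
  unfold gpdf
  positivity

include hSg in
/-- Master computation: exponential integrals against the Gaussian density. -/
lemma master (w : Fin d → ℝ) :
    Integrable (fun x => Real.exp (w ⬝ᵥ (x - μ)) * gpdf μ Sg x) volume ∧
      ∫ x, Real.exp (w ⬝ᵥ (x - μ)) * gpdf μ Sg x = Real.exp (w ⬝ᵥ (Sg *ᵥ w) / 2) := by
  classical
  have hex : ∃ B : Matrix (Fin d) (Fin d) ℝ, B * B = Sg ∧ Bᵀ = B := by
    open scoped MatrixOrder in
    refine ⟨CFC.sqrt Sg, CFC.sqrt_mul_sqrt_self Sg hSg.posSemidef.nonneg, ?_⟩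
    open scoped MatrixOrder in
    have := (CFC.sqrt_nonneg Sg).posSemidef.isHermitian
    simpa [Matrix.IsHermitian, Matrix.conjTranspose_eq_transpose_of_trivial] using this
  obtain ⟨B, hBB, hBsym⟩ := hex
  have hdetSg : 0 < Sg.det := hSg.det_pos
  have hdet2 : B.det * B.det = Sg.det := by rw [← Matrix.det_mul, hBB]
  have hdetB' : B.det ≠ 0 := by
    intro h; rw [h] at hdet2; simp at hdet2; exact hdetSg.ne' hdet2.symm
  -- B * Sg⁻¹ * B = 1
  have hBq : Bᵀ * Sg⁻¹ * B = 1 := by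
    rw [hBsym, ← hBB, Matrix.mul_inv_rev]
    calc B * (B⁻¹ * B⁻¹) * B = B * B⁻¹ * (B⁻¹ * B) := by simp only [Matrix.mul_assoc]
    _ = 1 := by rw [Matrix.mul_nonsing_inv _ hdetB'.isUnit, Matrix.nonsing_inv_mul _ hdetB'.isUnit, Matrix.one_mul]
  set T : (Fin d → ℝ) → (Fin d → ℝ) := fun y => μ + B *ᵥ y with hTdef
  have hTlin : T = (fun x => μ + x) ∘ (Matrix.toLin' B) := by
    funext y; simp [hTdef, Matrix.toLin'_apply]
  have hTm : Measurable T := by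
    rw [hTlin]
    exact (measurable_const_add μ).comp (Matrix.toLin' B).continuous_of_finiteDimensional.measurable
  have hmap : Measure.map T volume = ENNReal.ofReal |B.det|⁻¹ • volume := by
    rw [hTlin, ← Measure.map_map (measurable_const_add μ)
      (Matrix.toLin' B).continuous_of_finiteDimensional.measurable,
      Real.map_matrix_volume_pi_eq_smul_volume_pi hdetB', Measure.map_smul,
      map_add_left_eq_self, abs_inv]
  have hc0 : ENNReal.ofReal |B.det|⁻¹ ≠ 0 := by
    simp [ENNReal.ofReal_eq_zero, not_le, inv_pos, abs_pos, hdetB']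
  have hctop : ENNReal.ofReal |B.det|⁻¹ ≠ ⊤ := ENNReal.ofReal_ne_top
  have hcov : ∀ f : (Fin d → ℝ) → ℝ, AEStronglyMeasurable f (volume : Measure (Fin d → ℝ)) →
      (Integrable f volume ↔ Integrable (fun y => f (T y)) volume) ∧
      ∫ x, f x = |B.det| * ∫ y, f (T y) := by
    intro f hf
    have hfm : AEStronglyMeasurable f (Measure.map T volume) := by
      rw [hmap]; exact hf.mono_ac Measure.smul_absolutelyContinuous
    have hint : Integrable f (Measure.map T volume) ↔ Integrable (fun y => f (T y)) volume := by
      rw [integrable_map_measure hfm hTm.aemeasurable]; rfl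
    constructor
    · rw [← hint, hmap, integrable_smul_measure hc0 hctop]
    · have h1 : ∫ x, f x ∂(Measure.map T volume) = ∫ y, f (T y) := integral_map hTm.aemeasurable hfm
      rw [hmap, integral_smul_measure, ENNReal.toReal_ofReal (by positivity)] at h1
      rw [smul_eq_mul] at h1
      have habs : |B.det| ≠ 0 := by simpa using hdetB'
      field_simp at h1 ⊢
      linarith [h1]
  -- pointwise algebra
  set q := w ⬝ᵥ (Sg *ᵥ w) with hqdef
  set a : Fin d → ℝ := B *ᵥ w with hadef
  have hq : a ⬝ᵥ a = q := by
    have h := conj_dot B 1 w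
    simpa [hadef, hqdef, Matrix.one_mulVec, Matrix.mul_one, hBsym, hBB] using h
  have hquad : ∀ y : Fin d → ℝ, (B *ᵥ y) ⬝ᵥ (Sg⁻¹ *ᵥ (B *ᵥ y)) = y ⬝ᵥ y := fun y => by
    rw [conj_dot, hBq, Matrix.one_mulVec]
  have hlin : ∀ y : Fin d → ℝ, w ⬝ᵥ (B *ᵥ y) = a ⬝ᵥ y := fun y => by
    rw [dot_mulVec_symm, hBsym]
  set c : ℝ := (Real.sqrt ((2 * Real.pi) ^ d * Sg.det))⁻¹ with hcdef
  have hpt : ∀ y : Fin d → ℝ, Real.exp (w ⬝ᵥ (T y - μ)) * gpdf μ Sg (T y)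
      = (c * Real.exp (q / 2)) * ∏ i, Real.exp (-((y i - a i) ^ 2 / 2)) := by
    intro y
    have hTy : T y - μ = B *ᵥ y := by simp [hTdef]
    have harg : a ⬝ᵥ y + -(1 / 2) * (y ⬝ᵥ y) = a ⬝ᵥ a / 2 + ∑ i, -((y i - a i) ^ 2 / 2) := by
      simp only [dotProduct, Finset.sum_div, neg_mul, Finset.mul_sum,
        ← Finset.sum_neg_distrib, ← Finset.sum_add_distrib]
      exact Finset.sum_congr rfl fun i _ => by ring
    unfold gpdf
    rw [hTy, hquad, hlin, ← hcdef, ← Real.exp_sum]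
    have hrhs : c * Real.exp (q / 2) * Real.exp (∑ i, -((y i - a i) ^ 2 / 2))
        = c * Real.exp (a ⬝ᵥ y + -(1 / 2) * (y ⬝ᵥ y)) := by
      rw [mul_assoc, ← Real.exp_add, ← hq, ← harg]
    rw [hrhs, Real.exp_add]
    ring
  -- 1D facts
  have h1d : ∀ t0 : ℝ, Integrable (fun t : ℝ => Real.exp (-((t - t0) ^ 2 / 2))) volume := by
    intro t0
    have h := (integrable_exp_neg_mul_sq (b := 1 / 2) (by norm_num)).comp_sub_right t0
    refine h.congr (Filter.Eventually.of_forall fun t => ?_)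
    ring_nf
  have h1dval : ∀ t0 : ℝ, (∫ t : ℝ, Real.exp (-((t - t0) ^ 2 / 2))) = Real.sqrt (2 * π) := by
    intro t0
    rw [integral_sub_right_eq_self (fun t : ℝ => Real.exp (-(t ^ 2 / 2))) t0]
    have h := integral_gaussian (1 / 2)
    rw [show π / (1 / 2) = 2 * π by ring] at h
    rw [← h]
    congr 1; funext t; ring_nf
  -- product facts
  have hprodInt : Integrable (fun y : Fin d → ℝ => ∏ i, Real.exp (-((y i - a i) ^ 2 / 2))) volume :=
    Integrable.fintype_prod (f := fun i t => Real.exp (-((t - a i) ^ 2 / 2))) fun i => h1d (a i)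
  have hprodVal : (∫ y : Fin d → ℝ, ∏ i, Real.exp (-((y i - a i) ^ 2 / 2)))
      = Real.sqrt (2 * π) ^ d := by
    rw [integral_fintype_prod_volume_eq_prod (fun i t => Real.exp (-((t - a i) ^ 2 / 2)))]
    simp only [h1dval]
    simp
  -- measurability of the integrand
  have hcw : Continuous fun x : Fin d → ℝ => w ⬝ᵥ (x - μ) := by
    simp only [dotProduct]
    exact continuous_finset_sum _ fun i _ =>
      continuous_const.mul ((continuous_apply i).sub continuous_const)
  have hf : AEStronglyMeasurable (fun x => Real.exp (w ⬝ᵥ (x - μ)) * gpdf μ Sg x)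
      (volume : Measure (Fin d → ℝ)) :=
    ((Real.continuous_exp.comp hcw).mul (continuous_gpdf μ Sg)).aestronglyMeasurable
  obtain ⟨hiff, hval⟩ := hcov _ hf
  have hcomp : (fun y => Real.exp (w ⬝ᵥ (T y - μ)) * gpdf μ Sg (T y))
      = fun y => (c * Real.exp (q / 2)) * ∏ i, Real.exp (-((y i - a i) ^ 2 / 2)) := funext hpt
  -- final normalization constant
  have hnorm : |B.det| * c * Real.sqrt (2 * π) ^ d = 1 := by
    have hSgdet : Sg.det = B.det ^ 2 := by rw [← hdet2]; ring
    have h2pi : (0 : ℝ) ≤ 2 * π := by positivity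
    have hsq : Real.sqrt ((2 * π) ^ d) = Real.sqrt (2 * π) ^ d := by
      rw [show (2 * π) ^ d = (Real.sqrt (2 * π) ^ d) ^ 2 by
        rw [← pow_mul, mul_comm d 2, pow_mul, Real.sq_sqrt h2pi],
        Real.sqrt_sq (by positivity)]
    rw [hcdef, hSgdet, Real.sqrt_mul (by positivity), Real.sqrt_sq_eq_abs, hsq]
    have h1 : |B.det| ≠ 0 := by simpa using hdetB'
    have h2 : Real.sqrt (2 * π) ^ d ≠ 0 := by positivity
    field_simp
  constructor
  · rw [hiff, hcomp]
    exact hprodInt.const_mul _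
  · rw [hval, hcomp, MeasureTheory.integral_const_mul, hprodVal]
    calc |B.det| * (c * Real.exp (q / 2) * Real.sqrt (2 * π) ^ d)
        = (|B.det| * c * Real.sqrt (2 * π) ^ d) * Real.exp (q / 2) := by ring
    _ = Real.exp (q / 2) := by rw [hnorm, one_mul]

include hSg in
lemma gauss_int_iff (g : (Fin d → ℝ) → ℝ) :
    Integrable g (gauss μ Sg) ↔ Integrable (fun x => g x * gpdf μ Sg x) volume := by
  unfold gauss
  rw [integrable_withDensity_iff ((continuous_gpdf μ Sg).measurable.ennreal_ofReal)
    (Filter.Eventually.of_forall fun x => ENNReal.ofReal_lt_top)]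
  refine integrable_congr (Filter.Eventually.of_forall fun x => ?_)
  simp only []
  rw [ENNReal.toReal_ofReal (gpdf_nonneg μ Sg x)]

lemma gauss_integral_eq (g : (Fin d → ℝ) → ℝ) :
    ∫ x, g x ∂(gauss μ Sg) = ∫ x, g x * gpdf μ Sg x := by
  unfold gauss
  have hrw : (fun x => ENNReal.ofReal (gpdf μ Sg x))
      = fun x => ((Real.toNNReal (gpdf μ Sg x) : NNReal) : ENNReal) := rfl
  rw [hrw, integral_withDensity_eq_integral_smul (f := fun x => (gpdf μ Sg x).toNNReal)
    ((continuous_gpdf μ Sg).measurable.real_toNNReal) g]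
  congr 1; funext x
  rw [NNReal.smul_def, Real.coe_toNNReal _ (gpdf_nonneg μ Sg x), smul_eq_mul, mul_comm]

include hSg in
lemma gauss_exp_int (w : Fin d → ℝ) :
    Integrable (fun x => Real.exp (w ⬝ᵥ (x - μ))) (gauss μ Sg) :=
  (gauss_int_iff μ Sg hSg _).2 (master μ Sg hSg w).1

include hSg in
lemma gauss_exp_val (w : Fin d → ℝ) :
    ∫ x, Real.exp (w ⬝ᵥ (x - μ)) ∂(gauss μ Sg) = Real.exp (w ⬝ᵥ (Sg *ᵥ w) / 2) := by
  rw [gauss_integral_eq μ Sg]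
  exact (master μ Sg hSg w).2

include hSg in
lemma gpdf_integrable : Integrable (gpdf μ Sg) volume := by
  have h := (master μ Sg hSg 0).1
  refine h.congr (Filter.Eventually.of_forall fun x => ?_)
  simp [zero_dotProduct]

include hSg in
lemma gauss_isProb : IsProbabilityMeasure (gauss μ Sg) := by
  constructor
  unfold gauss
  rw [withDensity_apply _ MeasurableSet.univ, Measure.restrict_univ,
    ← ofReal_integral_eq_lintegral_ofReal (gpdf_integrable μ Sg hSg)
      (Filter.Eventually.of_forall (gpdf_nonneg μ Sg))]
  have h := (master μ Sg hSg 0).2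
  simp only [zero_dotProduct, Real.exp_zero, one_mul, zero_div] at h
  rw [h, ENNReal.ofReal_one]

include hSg in
lemma gauss_coord_int (i : Fin d) : Integrable (fun x => x i) (gauss μ Sg) := by
  have hP : IsProbabilityMeasure (gauss μ Sg) := gauss_isProb μ Sg hSg
  set e : Fin d → ℝ := Pi.single i 1 with hedef
  have he : ∀ v : Fin d → ℝ, e ⬝ᵥ v = v i := fun v => by
    simp [hedef, dotProduct, Pi.single_apply]
  have hne : ∀ v : Fin d → ℝ, (-e) ⬝ᵥ v = -(v i) := fun v => by
    rw [neg_dotProduct, he v]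
  refine Integrable.mono ((integrable_const |μ i|).add
    ((gauss_exp_int μ Sg hSg e).add (gauss_exp_int μ Sg hSg (-e))))
    ((measurable_pi_apply i).aestronglyMeasurable) (Filter.Eventually.of_forall fun x => ?_)
  have h1 : ∀ t : ℝ, |t| ≤ Real.exp t + Real.exp (-t) := by
    intro t
    rcases abs_cases t with ⟨h, _⟩ | ⟨h, _⟩ <;> rw [h] <;>
      nlinarith [Real.add_one_le_exp t, Real.add_one_le_exp (-t), Real.exp_pos t, Real.exp_pos (-t)]
  have h2 := h1 (x i - μ i)
  have h3 : |x i| ≤ |μ i| + |x i - μ i| := by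
    rcases abs_sub_abs_le_abs_sub (x i) (μ i) with h
    have := abs_abs_sub_abs_le_abs_sub (x i) (μ i)
    nlinarith [abs_nonneg (x i - μ i), abs_nonneg (μ i), neg_abs_le (μ i), le_abs_self (x i), neg_abs_le (x i)]
  have hx : (x - μ) i = x i - μ i := rfl
  simp only [Pi.add_apply, Real.norm_eq_abs]
  rw [he, hne, hx]
  rw [abs_of_nonneg (show (0:ℝ) ≤ |μ i| + (Real.exp (x i - μ i) + Real.exp (-(x i - μ i))) by positivity)]
  calc |x i| ≤ |μ i| + |x i - μ i| := h3
  _ ≤ |μ i| + (Real.exp (x i - μ i) + Real.exp (-(x i - μ i))) := by linarith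

end helpers

/-- If `N(μ,Σ;S) ≥ α` with `α ∈ (0,1]`, then the mean `μ_S` of the
truncated normal `N(μ,Σ,S)` satisfies `‖μ_S − μ‖_Σ ≤ √(2 log(1/α)) + 1`, where
`‖x‖_Σ = √(xᵀΣ⁻¹x)` is the Mahalanobis norm. -/
theorem statement10 {d : ℕ} (μ : Fin d → ℝ) (Sg : Matrix (Fin d) (Fin d) ℝ)
    (hSg : Sg.PosDef) (S : Set (Fin d → ℝ)) (hS : MeasurableSet S)
    (α : ℝ) (h0 : 0 < α) (h1 : α ≤ 1)
    (hmass : ENNReal.ofReal α ≤ gauss μ Sg S) :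
    Real.sqrt ((meanv (truncGauss μ Sg S) - μ) ⬝ᵥ
        (Sg⁻¹ *ᵥ (meanv (truncGauss μ Sg S) - μ))) ≤
      Real.sqrt (2 * Real.log (1 / α)) + 1 := by
  classical
  set P := gauss μ Sg with hPdef
  haveI hP : IsProbabilityMeasure P := gauss_isProb μ Sg hSg
  have hPS0 : P S ≠ 0 := by
    intro h
    rw [h, nonpos_iff_eq_zero, ENNReal.ofReal_eq_zero] at hmass
    linarith
  set Q := truncGauss μ Sg S with hQdef
  have hQeq : Q = (P S)⁻¹ • P.restrict S := rfl
  haveI hQP : IsProbabilityMeasure Q := ProbabilityTheory.cond_isProbabilityMeasure hPS0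
  haveI : NeZero Q := ⟨hQP.ne_zero⟩
  -- transfer integrability
  have hQint : ∀ f : (Fin d → ℝ) → ℝ, Integrable f P → Integrable f Q := by
    intro f hf
    rw [hQeq]
    exact (hf.restrict).smul_measure (ENNReal.inv_ne_top.mpr hPS0)
  -- integral comparison for nonnegative functions
  have hQle : ∀ f : (Fin d → ℝ) → ℝ, Integrable f P → (∀ x, 0 ≤ f x) →
      (∫ x, f x ∂Q) ≤ α⁻¹ * ∫ x, f x ∂P := by
    intro f hf hf0
    rw [hQeq, integral_smul_measure, ENNReal.toReal_inv, smul_eq_mul]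
    have h1' : (∫ x in S, f x ∂P) ≤ ∫ x, f x ∂P :=
      setIntegral_le_integral hf (Filter.Eventually.of_forall hf0)
    have h2' : 0 ≤ ∫ x in S, f x ∂P := setIntegral_nonneg hS fun x _ => hf0 x
    have h3' : α ≤ (P S).toReal := by
      have := ENNReal.toReal_mono (measure_ne_top P S) hmass
      rwa [ENNReal.toReal_ofReal h0.le] at this
    have h4' : (P S).toReal⁻¹ ≤ α⁻¹ := by
      apply inv_anti₀ h0 h3'
    calc (P S).toReal⁻¹ * ∫ x in S, f x ∂P ≤ α⁻¹ * ∫ x in S, f x ∂P :=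
          mul_le_mul_of_nonneg_right h4' h2'
    _ ≤ α⁻¹ * ∫ x, f x ∂P := mul_le_mul_of_nonneg_left h1' (by positivity)
  -- the key directional bound
  have claim : ∀ v : Fin d → ℝ, v ⬝ᵥ (meanv Q - μ) ≤ (v ⬝ᵥ (Sg *ᵥ v)) / 2 + Real.log (1 / α) := by
    intro v
    set Zv : (Fin d → ℝ) → ℝ := fun x => v ⬝ᵥ (x - μ) with hZdef
    have hZalt : Zv = fun x => (∑ i, v i * x i) - v ⬝ᵥ μ := by
      funext x
      simp [hZdef, dotProduct, mul_sub, Finset.sum_sub_distrib]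
    have hZintP : Integrable Zv P := by
      rw [hZalt]
      exact (integrable_finset_sum _ fun i _ =>
        (gauss_coord_int μ Sg hSg i).const_mul (v i)).sub (integrable_const _)
    have hZint : Integrable Zv Q := hQint _ hZintP
    have hexpint : Integrable (fun x => Real.exp (Zv x)) Q :=
      hQint _ (gauss_exp_int μ Sg hSg v)
    have hEZ : (∫ x, Zv x ∂Q) = v ⬝ᵥ (meanv Q - μ) := by
      rw [hZalt]
      rw [integral_sub (integrable_finset_sum _ fun i _ =>
          (hQint _ (gauss_coord_int μ Sg hSg i)).const_mul (v i)) (integrable_const _),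
        integral_finset_sum _ fun i _ => (hQint _ (gauss_coord_int μ Sg hSg i)).const_mul (v i),
        integral_const]
      simp only [probReal_univ, one_smul]
      have : ∀ i, (∫ x : Fin d → ℝ, v i * x i ∂Q) = v i * meanv Q i := fun i =>
        integral_const_mul (v i) _
      rw [Finset.sum_congr rfl fun i _ => this i]
      simp [dotProduct, mul_sub, Finset.sum_sub_distrib, meanv]
    -- Jensen
    have hJ : Real.exp (∫ x, Zv x ∂Q) ≤ ∫ x, Real.exp (Zv x) ∂Q := by
      have h := convexOn_exp.map_average_le Real.continuous_exp.continuousOn isClosed_univ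
        (Filter.Eventually.of_forall fun x => Set.mem_univ (Zv x)) hZint hexpint
      rwa [average_eq_integral, average_eq_integral] at h
    have hMGF : (∫ x, Real.exp (Zv x) ∂P) = Real.exp (v ⬝ᵥ (Sg *ᵥ v) / 2) :=
      gauss_exp_val μ Sg hSg v
    have hchain : Real.exp (v ⬝ᵥ (meanv Q - μ)) ≤
        Real.exp ((v ⬝ᵥ (Sg *ᵥ v)) / 2 + Real.log (1 / α)) := by
      rw [← hEZ]
      refine hJ.trans ?_
      have h5 := hQle _ (gauss_exp_int μ Sg hSg v) (fun x => (Real.exp_pos _).le)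
      rw [hMGF] at h5
      refine h5.trans ?_
      rw [Real.exp_add, ← one_div, Real.exp_log (by positivity)]
      ring_nf
      try exact le_refl _
    exact Real.exp_le_exp.mp hchain
  -- conclude
  set ν : Fin d → ℝ := meanv Q - μ with hνdef
  set tsq : ℝ := ν ⬝ᵥ (Sg⁻¹ *ᵥ ν) with htsqdef
  set L : ℝ := Real.log (1 / α) with hLdef
  have hL0 : 0 ≤ L := Real.log_nonneg (by rw [le_div_iff₀ h0]; linarith)
  set lam : ℝ := Real.sqrt (2 * L) + 1 with hlamdef
  have hlam0 : 0 < lam := by positivity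
  have hlamsq : L ≤ lam ^ 2 / 2 := by
    have h6 : Real.sqrt (2 * L) ≤ lam := by rw [hlamdef]; linarith
    have h7 : 2 * L = Real.sqrt (2 * L) ^ 2 := (Real.sq_sqrt (by linarith)).symm
    nlinarith [Real.sqrt_nonneg (2 * L)]
  have htsq0 : 0 ≤ tsq := by
    have hinv : (Sg⁻¹).PosDef := hSg.inv
    have := hinv.posSemidef.dotProduct_mulVec_nonneg ν
    simpa using this
  set t : ℝ := Real.sqrt tsq with htdef
  have ht0 : 0 ≤ t := Real.sqrt_nonneg _
  show t ≤ lam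
  rcases eq_or_lt_of_le htsq0 with h | htsqpos
  · rw [htdef, ← h, Real.sqrt_zero]; linarith
  · have htpos : 0 < t := Real.sqrt_pos.mpr htsqpos
    have htt : t * t = tsq := Real.mul_self_sqrt htsq0
    set u : Fin d → ℝ := Sg⁻¹ *ᵥ ν with hudef
    have hu1 : u ⬝ᵥ ν = tsq := by rw [dotProduct_comm]
    have hSu : Sg *ᵥ u = ν := by
      rw [hudef, Matrix.mulVec_mulVec, Matrix.mul_nonsing_inv _ hSg.det_pos.ne'.isUnit,
        Matrix.one_mulVec]
    set v : Fin d → ℝ := (lam / t) • u with hvdef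
    have hv1 : v ⬝ᵥ ν = lam * t := by
      rw [hvdef, smul_dotProduct, smul_eq_mul, hu1, ← htt]
      field_simp
    have hv2 : v ⬝ᵥ (Sg *ᵥ v) = lam ^ 2 := by
      rw [hvdef, smul_dotProduct, Matrix.mulVec_smul, dotProduct_smul, hSu,
        smul_eq_mul, smul_eq_mul, hu1, ← htt]
      field_simp
    have h8 := claim v
    rw [hv1, hv2] at h8
    nlinarith

end
end
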